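/- arXiv:1607.03587 — 3 statements merged into one kernel-verified Lean document; each statement's English description precedes it below -/
import Mathlib

section
/- Let (e_i) be a normalized bimonotone 1-spreading Schauder basis for a Banach space X. Let (σ_j)_{j≥1} be a partition of ℕ into successive nonempty finite intervals σ_1 < σ_2 < … with |σ_j| = n_j. Then the averaging operator Q defined by Q(Σ_i a_i e_i) = Σ_j ((Σ_{i∈σ_j} a_i)/n_j)(Σ_{i∈σ_j} e_i) is a well-defined bounded linear projection on X with ‖Q‖ ≤ 3. -/
open Filter Finset Topology NormedSpace
open scoped NNReal

/-- `e` is a Schauder basis of `X`: every vector has a unique expansion whose partial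
sums converge in norm. -/
def IsSchauderBasis {X : Type} [NormedAddCommGroup X] [NormedSpace ℝ X] (e : ℕ → X) : Prop :=
  ∀ x : X, ∃! a : ℕ → ℝ,
    Tendsto (fun n => ∑ i ∈ Finset.range n, a i • e i) atTop (𝓝 x)

/-- `e` is `1`-spreading. -/
def IsOneSpreading {X : Type} [NormedAddCommGroup X] [NormedSpace ℝ X] (e : ℕ → X) : Prop :=
  ∀ (k : ℕ) (a : ℕ → ℝ) (n : ℕ → ℕ), StrictMono n →
    ‖∑ i ∈ Finset.range k, a i • e (n i)‖ = ‖∑ i ∈ Finset.range k, a i • e i‖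

/-- `e` is bimonotone: interval projections of (finitely supported) expansions have norm
at most the norm of the whole vector. -/
def IsBimonotone {X : Type} [NormedAddCommGroup X] [NormedSpace ℝ X] (e : ℕ → X) : Prop :=
  ∀ (N m n : ℕ) (a : ℕ → ℝ),
    ‖∑ i ∈ (Finset.range N).filter (fun i => m ≤ i ∧ i ≤ n), a i • e i‖ ≤
      ‖∑ i ∈ Finset.range N, a i • e i‖


namespace AvgProj


lemma le_self_apply {p : ℕ → ℕ} (hp : StrictMono p) (n : ℕ) : n ≤ p n := by
  induction n with
  | zero => exact Nat.zero_le _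
  | succ n ih => exact Nat.succ_le_of_lt (lt_of_le_of_lt ih (hp (Nat.lt_succ_self n)))

lemma jex {p : ℕ → ℕ} (hp : StrictMono p) (i : ℕ) : ∃ j, i < p (j + 1) :=
  ⟨i, lt_of_lt_of_le (Nat.lt_succ_self i) (le_self_apply hp (i + 1))⟩

def jdx (p : ℕ → ℕ) (hp : StrictMono p) (i : ℕ) : ℕ := Nat.find (jex hp i)

variable {p : ℕ → ℕ}

lemma jdx_lt (hp : StrictMono p) (i : ℕ) : i < p (jdx p hp i + 1) :=
  Nat.find_spec (jex hp i)

lemma jdx_le (hp : StrictMono p) (hp0 : p 0 = 0) (i : ℕ) : p (jdx p hp i) ≤ i := by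
  cases h : jdx p hp i with
  | zero => simp [hp0]
  | succ k =>
    have hmin := Nat.find_min (jex hp i) (show k < jdx p hp i by omega)
    exact Nat.le_of_not_lt hmin

lemma jdx_eq (hp : StrictMono p) (hp0 : p 0 = 0) {i j : ℕ}
    (h1 : p j ≤ i) (h2 : i < p (j + 1)) : jdx p hp i = j := by
  have hle : jdx p hp i ≤ j := Nat.find_min' _ h2
  rcases eq_or_lt_of_le hle with h | h
  · exact h
  · exfalso
    have h3 : jdx p hp i + 1 ≤ j := h
    have h4 := hp.monotone h3
    have h5 := jdx_lt hp i
    omega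

lemma block_pos (hp : StrictMono p) (j : ℕ) : 0 < p (j + 1) - p j := by
  have := hp (show j < j + 1 by omega); omega

/-! the three spreading maps, built from branch functions -/

def fA (n u r : ℕ) : ℕ := if u + r < n then n + (u + r) else n + n + (u + r - n)
def fB (n u r : ℕ) : ℕ := if u + r < n then u else n + (u + r - n)
def fC (n u r : ℕ) : ℕ := if u + r < n then u else n + n + (u + r - n)
def fMid (n u r : ℕ) : ℕ := n + (u + r) % n

def mkMap (p : ℕ → ℕ) (hp : StrictMono p) (f : ℕ → ℕ → ℕ → ℕ) (m i : ℕ) : ℕ :=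
  3 * p (jdx p hp i) +
    f (p (jdx p hp i + 1) - p (jdx p hp i)) (i - p (jdx p hp i))
      (m % (p (jdx p hp i + 1) - p (jdx p hp i)))

lemma mkMap_strictMono (hp : StrictMono p) (hp0 : p 0 = 0) {f : ℕ → ℕ → ℕ → ℕ}
    (hbound : ∀ n u r, 0 < n → u < n → r < n → f n u r < 3 * n)
    (hstep : ∀ n u r, 0 < n → u + 1 < n → r < n → f n u r < f n (u + 1) r) (m : ℕ) :
    StrictMono (mkMap p hp f m) := by
  apply strictMono_nat_of_lt_succ
  intro i
  have h1 : p (jdx p hp i) ≤ i := jdx_le hp hp0 i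
  have h2 : i < p (jdx p hp i + 1) := jdx_lt hp i
  have hnpos : 0 < p (jdx p hp i + 1) - p (jdx p hp i) := block_pos hp _
  have hrlt : m % (p (jdx p hp i + 1) - p (jdx p hp i))
      < p (jdx p hp i + 1) - p (jdx p hp i) := Nat.mod_lt _ hnpos
  by_cases hs : i + 1 < p (jdx p hp i + 1)
  · have hjj : jdx p hp (i + 1) = jdx p hp i := jdx_eq hp hp0 (by omega) hs
    unfold mkMap
    rw [hjj]
    have hu : (i + 1) - p (jdx p hp i) = (i - p (jdx p hp i)) + 1 := by omega
    rw [hu]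
    have := hstep (p (jdx p hp i + 1) - p (jdx p hp i)) (i - p (jdx p hp i))
      (m % (p (jdx p hp i + 1) - p (jdx p hp i))) hnpos (by omega) hrlt
    omega
  · have hi1 : i + 1 = p (jdx p hp i + 1) := by omega
    have hjj : jdx p hp (i + 1) = jdx p hp i + 1 := by
      refine jdx_eq hp hp0 (by omega) ?_
      have := hp (show jdx p hp i + 1 < jdx p hp i + 1 + 1 by omega)
      omega
    have hb := hbound (p (jdx p hp i + 1) - p (jdx p hp i)) (i - p (jdx p hp i))
      (m % (p (jdx p hp i + 1) - p (jdx p hp i))) hnpos (by omega) hrlt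
    unfold mkMap
    rw [hjj]
    have hz : (0:ℕ) ≤ f (p (jdx p hp i + 1 + 1) - p (jdx p hp i + 1))
        ((i+1) - p (jdx p hp i + 1)) (m % (p (jdx p hp i + 1 + 1) - p (jdx p hp i + 1))) :=
      Nat.zero_le _
    omega

lemma fA_bound : ∀ n u r, 0 < n → u < n → r < n → fA n u r < 3 * n := by
  intro n u r h1 h2 h3; unfold fA; split_ifs <;> omega
lemma fA_step : ∀ n u r, 0 < n → u + 1 < n → r < n → fA n u r < fA n (u + 1) r := by
  intro n u r h1 h2 h3; unfold fA; split_ifs <;> omega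
lemma fB_bound : ∀ n u r, 0 < n → u < n → r < n → fB n u r < 3 * n := by
  intro n u r h1 h2 h3; unfold fB; split_ifs <;> omega
lemma fB_step : ∀ n u r, 0 < n → u + 1 < n → r < n → fB n u r < fB n (u + 1) r := by
  intro n u r h1 h2 h3; unfold fB; split_ifs <;> omega
lemma fC_bound : ∀ n u r, 0 < n → u < n → r < n → fC n u r < 3 * n := by
  intro n u r h1 h2 h3; unfold fC; split_ifs <;> omega
lemma fC_step : ∀ n u r, 0 < n → u + 1 < n → r < n → fC n u r < fC n (u + 1) r := by
  intro n u r h1 h2 h3; unfold fC; split_ifs <;> omega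

lemma mid_split {X : Type} [AddCommGroup X] (E : ℕ → X)
    (hp : StrictMono p) (hp0 : p 0 = 0) (m i : ℕ) :
    E (mkMap p hp fMid m i)
      = E (mkMap p hp fA m i) + E (mkMap p hp fB m i) - E (mkMap p hp fC m i) := by
  have h1 : p (jdx p hp i) ≤ i := jdx_le hp hp0 i
  have h2 : i < p (jdx p hp i + 1) := jdx_lt hp i
  have hnpos : 0 < p (jdx p hp i + 1) - p (jdx p hp i) := block_pos hp _
  unfold mkMap fA fB fC fMid
  set n := p (jdx p hp i + 1) - p (jdx p hp i) with hn
  set u := i - p (jdx p hp i) with hu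
  set r := m % n with hr
  have hul : u < n := by omega
  have hrl : r < n := Nat.mod_lt _ hnpos
  by_cases hbr : u + r < n
  · rw [if_pos hbr, if_pos hbr, if_pos hbr, Nat.mod_eq_of_lt hbr, add_sub_cancel_right]
  · have hmod : (u + r) % n = u + r - n := by
      rw [Nat.mod_eq_sub_mod (by omega), Nat.mod_eq_of_lt (by omega)]
    rw [hmod, if_neg hbr, if_neg hbr, if_neg hbr, add_sub_cancel_left]

lemma modmod (u m n : ℕ) : (u + m % n) % n = (u + m) % n := by
  conv_lhs => rw [Nat.add_mod, Nat.mod_mod_of_dvd m dvd_rfl, ← Nat.add_mod]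

lemma rot {M : Type} [AddCommGroup M] (f : ℕ → M) {n : ℕ} (u : ℕ) :
    ∑ t ∈ range n, f ((u + t) % n) = ∑ v ∈ range n, f v := by
  induction u with
  | zero =>
    exact Finset.sum_congr rfl fun t ht => by
      rw [Nat.zero_add, Nat.mod_eq_of_lt (mem_range.mp ht)]
  | succ u ih =>
    have key : ∑ t ∈ range n, f ((u + (t + 1)) % n) = ∑ t ∈ range n, f ((u + t) % n) := by
      have h1 := Finset.sum_range_succ (fun t => f ((u + t) % n)) n
      have h2 := Finset.sum_range_succ' (fun t => f ((u + t) % n)) n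
      have h3 : f ((u + n) % n) = f ((u + 0) % n) := by rw [Nat.add_mod_right, Nat.add_zero]
      have h4 := h2.symm.trans h1
      rw [h3, Nat.add_zero] at h4
      exact add_right_cancel h4
    calc ∑ t ∈ range n, f ((u + 1 + t) % n)
        = ∑ t ∈ range n, f ((u + (t + 1)) % n) := by
          refine Finset.sum_congr rfl fun t _ => ?_
          rw [show u + 1 + t = u + (t + 1) by omega]
      _ = ∑ t ∈ range n, f ((u + t) % n) := key
      _ = ∑ v ∈ range n, f v := ih

lemma cycle {M : Type} [AddCommGroup M] (f : ℕ → M) {n L : ℕ} (hn : 0 < n) (hd : n ∣ L)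
    (u : ℕ) : ∑ m ∈ range L, f ((u + m) % n) = (L / n) • ∑ v ∈ range n, f v := by
  obtain ⟨c, rfl⟩ := hd
  rw [Nat.mul_div_cancel_left c hn]
  induction c with
  | zero => simp
  | succ c ih =>
    have e1 : ∑ m ∈ range (n * (c + 1)), f ((u + m) % n)
        = (∑ m ∈ range (n * c), f ((u + m) % n))
          + ∑ m ∈ Ico (n * c) (n * (c + 1)), f ((u + m) % n) := by
      rw [range_eq_Ico, range_eq_Ico]
      exact (Finset.sum_Ico_consecutive _ (Nat.zero_le _) (by nlinarith)).symm
    have e2 : ∑ m ∈ Ico (n * c) (n * (c + 1)), f ((u + m) % n) = ∑ v ∈ range n, f v := by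
      rw [Finset.sum_Ico_eq_sum_range, show n * (c + 1) - n * c = n by ring_nf; omega]
      calc ∑ t ∈ range n, f ((u + (n * c + t)) % n)
          = ∑ t ∈ range n, f ((u + t) % n) := by
            refine Finset.sum_congr rfl fun t _ => ?_
            rw [show u + (n * c + t) = (u + t) + c * n by ring, Nat.add_mul_mod_self_right]
        _ = ∑ v ∈ range n, f v := rot f u
    rw [e1, ih, e2, succ_nsmul]

lemma sum_blocks {M : Type} [AddCommMonoid M] (hp : StrictMono p) (hp0 : p 0 = 0)
    (g : ℕ → M) (J : ℕ) :
    ∑ i ∈ range (p J), g i = ∑ j ∈ range J, ∑ i ∈ Ico (p j) (p (j + 1)), g i := by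
  induction J with
  | zero => simp [hp0]
  | succ J ih =>
    rw [Finset.sum_range_succ, ← ih, range_eq_Ico, range_eq_Ico]
    exact (Finset.sum_Ico_consecutive g (Nat.zero_le (p J)) (hp.monotone (Nat.le_succ J))).symm


variable {p : ℕ → ℕ} {X : Type} [NormedAddCommGroup X] [NormedSpace ℝ X]

noncomputable def cf (p : ℕ → ℕ) (a : ℕ → ℝ) (j : ℕ) : ℝ :=
  ((p (j + 1) - p j : ℕ) : ℝ)⁻¹ * ∑ i ∈ Ico (p j) (p (j + 1)), a i

noncomputable def Qv (e : ℕ → X) (p : ℕ → ℕ) (a : ℕ → ℝ) (J : ℕ) : X :=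
  ∑ j ∈ range J, cf p a j • ∑ i' ∈ Ico (p j) (p (j + 1)), e i'

noncomputable def wv (e : ℕ → X) (p : ℕ → ℕ) (j : ℕ) : X :=
  ∑ v ∈ range (p (j + 1) - p j), e (3 * p j + ((p (j + 1) - p j) + v))

lemma Qv_eq_sum (e : ℕ → X) (hp : StrictMono p) (hp0 : p 0 = 0) (a : ℕ → ℝ) (J : ℕ) :
    Qv e p a J = ∑ i ∈ range (p J), cf p a (jdx p hp i) • e i := by
  rw [sum_blocks hp hp0 (fun i => cf p a (jdx p hp i) • e i) J]
  unfold Qv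
  refine Finset.sum_congr rfl fun j hj => ?_
  rw [Finset.smul_sum]
  refine Finset.sum_congr rfl fun i hi => ?_
  rw [jdx_eq hp hp0 (mem_Ico.mp hi).1 (mem_Ico.mp hi).2]

lemma key (e : ℕ → X) (hsp : IsOneSpreading e) (hp : StrictMono p) (hp0 : p 0 = 0)
    (a : ℕ → ℝ) (J : ℕ) :
    ‖Qv e p a J‖ ≤ 3 * ‖∑ i ∈ range (p J), a i • e i‖ := by
  classical
  set L := ∏ j ∈ range J, (p (j + 1) - p j) with hLdef
  have hLpos : 0 < L := Finset.prod_pos fun j _ => block_pos hp j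
  have hdvd : ∀ j ∈ range J, (p (j + 1) - p j) ∣ L := fun j hj => Finset.dvd_prod_of_mem _ hj
  -- Step 1 : reduce to the "gap coordinates" vector
  have s1a : Qv e p a J = ∑ i ∈ range (p J), cf p a (jdx p hp i) • e i :=
    Qv_eq_sum e hp hp0 a J
  have s1b : ∑ i ∈ range (p J), cf p a (jdx p hp i) • e (mkMap p hp fA 0 i)
      = ∑ j ∈ range J, cf p a j • wv e p j := by
    rw [sum_blocks hp hp0 (fun i => cf p a (jdx p hp i) • e (mkMap p hp fA 0 i)) J]
    refine Finset.sum_congr rfl fun j hj => ?_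
    have hstep : ∀ i ∈ Ico (p j) (p (j + 1)),
        cf p a (jdx p hp i) • e (mkMap p hp fA 0 i)
          = cf p a j • e (3 * p j + ((p (j + 1) - p j) + (i - p j))) := by
      intro i hi
      obtain ⟨hi1, hi2⟩ := mem_Ico.mp hi
      have hji : jdx p hp i = j := jdx_eq hp hp0 hi1 hi2
      have hfa : mkMap p hp fA 0 i = 3 * p j + ((p (j + 1) - p j) + (i - p j)) := by
        unfold mkMap fA
        rw [hji, Nat.zero_mod, Nat.add_zero, if_pos (by have := block_pos hp j; omega)]
      rw [hfa, hji]
    rw [Finset.sum_congr rfl hstep, Finset.sum_Ico_eq_sum_range]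
    unfold wv
    rw [Finset.smul_sum]
    refine Finset.sum_congr rfl fun t _ => ?_
    have : p j + t - p j = t := by omega
    rw [this]
  -- Step 2 : the exact averaging identity
  have s2 : ∑ m ∈ range L, ∑ i ∈ range (p J), a i • e (mkMap p hp fMid m i)
      = L • ∑ j ∈ range J, cf p a j • wv e p j := by
    calc ∑ m ∈ range L, ∑ i ∈ range (p J), a i • e (mkMap p hp fMid m i)
        = ∑ i ∈ range (p J), ∑ m ∈ range L, a i • e (mkMap p hp fMid m i) :=
          Finset.sum_comm
      _ = ∑ i ∈ range (p J), a i •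
            ((L / (p (jdx p hp i + 1) - p (jdx p hp i))) • wv e p (jdx p hp i)) := by
          refine Finset.sum_congr rfl fun i hi => ?_
          have hiJ : i < p J := mem_range.mp hi
          have h1 : p (jdx p hp i) ≤ i := jdx_le hp hp0 i
          have h2 : i < p (jdx p hp i + 1) := jdx_lt hp i
          have hjJ : jdx p hp i < J := by
            by_contra hcon
            push_neg at hcon
            have := hp.monotone hcon
            omega
          rw [← Finset.smul_sum]
          congr 1
          have hrw : ∀ m, mkMap p hp fMid m i
              = 3 * p (jdx p hp i) + ((p (jdx p hp i + 1) - p (jdx p hp i)) +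
                (((i - p (jdx p hp i)) + m) % (p (jdx p hp i + 1) - p (jdx p hp i)))) := by
            intro m
            unfold mkMap fMid
            rw [modmod]
          calc ∑ m ∈ range L, e (mkMap p hp fMid m i)
              = ∑ m ∈ range L, e (3 * p (jdx p hp i) +
                  ((p (jdx p hp i + 1) - p (jdx p hp i)) +
                  (((i - p (jdx p hp i)) + m) % (p (jdx p hp i + 1) - p (jdx p hp i))))) :=
                Finset.sum_congr rfl fun m _ => by rw [hrw m]
            _ = (L / (p (jdx p hp i + 1) - p (jdx p hp i))) •
                  ∑ v ∈ range (p (jdx p hp i + 1) - p (jdx p hp i)),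
                    e (3 * p (jdx p hp i) + ((p (jdx p hp i + 1) - p (jdx p hp i)) + v)) :=
                cycle (fun v => e (3 * p (jdx p hp i) +
                    ((p (jdx p hp i + 1) - p (jdx p hp i)) + v)))
                  (block_pos hp _) (hdvd _ (mem_range.mpr hjJ)) (i - p (jdx p hp i))
            _ = (L / (p (jdx p hp i + 1) - p (jdx p hp i))) • wv e p (jdx p hp i) := rfl
      _ = ∑ j ∈ range J, ∑ i ∈ Ico (p j) (p (j + 1)),
            a i • ((L / (p (j + 1) - p j)) • wv e p j) := by
          rw [sum_blocks hp hp0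
            (fun i => a i • ((L / (p (jdx p hp i + 1) - p (jdx p hp i))) • wv e p (jdx p hp i))) J]
          refine Finset.sum_congr rfl fun j hj => Finset.sum_congr rfl fun i hi => ?_
          obtain ⟨hi1, hi2⟩ := mem_Ico.mp hi
          rw [jdx_eq hp hp0 hi1 hi2]
      _ = ∑ j ∈ range J, ((L : ℝ) * cf p a j) • wv e p j := by
          refine Finset.sum_congr rfl fun j hj => ?_
          have hbp := block_pos hp j
          have hne : ((p (j + 1) - p j : ℕ) : ℝ) ≠ 0 := Nat.cast_ne_zero.mpr (by omega)
          have hcast : ((L / (p (j + 1) - p j) : ℕ) : ℝ)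
              = (L : ℝ) / ((p (j + 1) - p j : ℕ) : ℝ) := Nat.cast_div (hdvd j hj) hne
          calc ∑ i ∈ Ico (p j) (p (j + 1)), a i • ((L / (p (j + 1) - p j)) • wv e p j)
              = ∑ i ∈ Ico (p j) (p (j + 1)),
                  (a i * ((L / (p (j + 1) - p j) : ℕ) : ℝ)) • wv e p j := by
                refine Finset.sum_congr rfl fun i _ => ?_
                rw [← Nat.cast_smul_eq_nsmul ℝ, smul_smul]
            _ = ((∑ i ∈ Ico (p j) (p (j + 1)), a i) * ((L / (p (j + 1) - p j) : ℕ) : ℝ))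
                  • wv e p j := by rw [← Finset.sum_smul, ← Finset.sum_mul]
            _ = ((L : ℝ) * cf p a j) • wv e p j := by
                unfold cf
                rw [hcast]
                congr 1
                field_simp
      _ = L • ∑ j ∈ range J, cf p a j • wv e p j := by
          rw [Finset.smul_sum]
          refine Finset.sum_congr rfl fun j _ => ?_
          rw [← Nat.cast_smul_eq_nsmul ℝ, smul_smul]
  -- Step 3 : each summand has norm at most 3 ‖x‖
  have s3 : ∀ m ∈ range L, ‖∑ i ∈ range (p J), a i • e (mkMap p hp fMid m i)‖
      ≤ 3 * ‖∑ i ∈ range (p J), a i • e i‖ := by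
    intro m _
    have hidm : ∑ i ∈ range (p J), a i • e (mkMap p hp fMid m i)
        = (∑ i ∈ range (p J), a i • e (mkMap p hp fA m i))
          + (∑ i ∈ range (p J), a i • e (mkMap p hp fB m i))
          - ∑ i ∈ range (p J), a i • e (mkMap p hp fC m i) := by
      rw [← Finset.sum_add_distrib, ← Finset.sum_sub_distrib]
      refine Finset.sum_congr rfl fun i _ => ?_
      rw [mid_split e hp hp0 m i, smul_sub, smul_add]
    rw [hidm]
    have nA : ‖∑ i ∈ range (p J), a i • e (mkMap p hp fA m i)‖
        = ‖∑ i ∈ range (p J), a i • e i‖ :=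
      hsp (p J) a (mkMap p hp fA m) (mkMap_strictMono hp hp0 fA_bound fA_step m)
    have nB : ‖∑ i ∈ range (p J), a i • e (mkMap p hp fB m i)‖
        = ‖∑ i ∈ range (p J), a i • e i‖ :=
      hsp (p J) a (mkMap p hp fB m) (mkMap_strictMono hp hp0 fB_bound fB_step m)
    have nC : ‖∑ i ∈ range (p J), a i • e (mkMap p hp fC m i)‖
        = ‖∑ i ∈ range (p J), a i • e i‖ :=
      hsp (p J) a (mkMap p hp fC m) (mkMap_strictMono hp hp0 fC_bound fC_step m)
    have t1 := norm_sub_le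
      ((∑ i ∈ range (p J), a i • e (mkMap p hp fA m i))
        + ∑ i ∈ range (p J), a i • e (mkMap p hp fB m i))
      (∑ i ∈ range (p J), a i • e (mkMap p hp fC m i))
    have t2 := norm_add_le (∑ i ∈ range (p J), a i • e (mkMap p hp fA m i))
      (∑ i ∈ range (p J), a i • e (mkMap p hp fB m i))
    rw [nA, nB] at t2
    rw [nC] at t1
    linarith
  -- assemble
  have hTb : ‖∑ m ∈ range L, ∑ i ∈ range (p J), a i • e (mkMap p hp fMid m i)‖
      ≤ (L : ℝ) * (3 * ‖∑ i ∈ range (p J), a i • e i‖) := by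
    refine (norm_sum_le _ _).trans ?_
    calc ∑ m ∈ range L, ‖∑ i ∈ range (p J), a i • e (mkMap p hp fMid m i)‖
        ≤ ∑ _m ∈ range L, 3 * ‖∑ i ∈ range (p J), a i • e i‖ := Finset.sum_le_sum s3
      _ = (L : ℝ) * (3 * ‖∑ i ∈ range (p J), a i • e i‖) := by
          rw [Finset.sum_const, card_range, nsmul_eq_mul]
  have hQt : ‖∑ j ∈ range J, cf p a j • wv e p j‖ ≤ 3 * ‖∑ i ∈ range (p J), a i • e i‖ := by
    have h1 : ‖∑ m ∈ range L, ∑ i ∈ range (p J), a i • e (mkMap p hp fMid m i)‖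
        = (L : ℝ) * ‖∑ j ∈ range J, cf p a j • wv e p j‖ := by
      rw [s2, ← Nat.cast_smul_eq_nsmul ℝ, norm_smul, Real.norm_natCast]
    have hLr : (0 : ℝ) < L := by exact_mod_cast hLpos
    rw [h1] at hTb
    exact le_of_mul_le_mul_left hTb hLr
  have hfin : ‖Qv e p a J‖ = ‖∑ j ∈ range J, cf p a j • wv e p j‖ := by
    rw [s1a, ← hsp (p J) (fun i => cf p a (jdx p hp i)) (mkMap p hp fA 0)
      (mkMap_strictMono hp hp0 fA_bound fA_step 0), s1b]
  rw [hfin]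
  exact hQt

lemma pblock (e : ℕ → X) (hsp : IsOneSpreading e) (hbi : IsBimonotone e)
    {q m n : ℕ} (hmn : m ≤ n) :
    ‖∑ t ∈ range m, e (q + t)‖ ≤ ‖∑ t ∈ range n, e (q + t)‖ := by
  have h1 : ∀ k : ℕ, ‖∑ t ∈ range k, e (q + t)‖ = ‖∑ t ∈ range k, e t‖ := by
    intro k
    have hmono : StrictMono fun t => q + t := fun x y hxy => Nat.add_lt_add_left hxy q
    have := hsp k (fun _ => (1 : ℝ)) (fun t => q + t) hmono
    simpa [one_smul] using this
  rw [h1 m, h1 n]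
  rcases Nat.eq_zero_or_pos m with hm | hm
  · simp [hm]
  · have hband := hbi n 0 (m - 1) (fun _ => (1 : ℝ))
    have hfil : (range n).filter (fun i => 0 ≤ i ∧ i ≤ m - 1) = range m := by
      ext x; simp; omega
    rw [hfil] at hband
    simpa [one_smul] using hband

end AvgProj
open AvgProj in
theorem averaging_projection_bounded
    {X : Type} [NormedAddCommGroup X] [NormedSpace ℝ X] [CompleteSpace X]
    (e : ℕ → X) (hnorm : ∀ i, ‖e i‖ = 1) (hbasis : IsSchauderBasis e)
    (hspread : IsOneSpreading e) (hbi : IsBimonotone e)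
    -- the intervals `σ j = [p j, p (j+1))` partition `ℕ`
    (p : ℕ → ℕ) (hp0 : p 0 = 0) (hpmono : StrictMono p) :
    ∃ Q : X →L[ℝ] X, ‖Q‖ ≤ 3 ∧ (∀ x, Q (Q x) = Q x) ∧
      ∀ j : ℕ, ∀ i ∈ Finset.Ico (p j) (p (j + 1)),
        Q (e i) = (((p (j + 1) - p j : ℕ) : ℝ))⁻¹ •
          ∑ i' ∈ Finset.Ico (p j) (p (j + 1)), e i' := by
  classical
  set co : X → ℕ → ℝ := fun x => (hbasis x).choose with hco
  have hten : ∀ x : X,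
      Tendsto (fun n => ∑ i ∈ Finset.range n, co x i • e i) atTop (𝓝 x) :=
    fun x => (hbasis x).choose_spec.1
  have huni : ∀ (x : X) (b : ℕ → ℝ),
      Tendsto (fun n => ∑ i ∈ Finset.range n, b i • e i) atTop (𝓝 x) → b = co x :=
    fun x b hb => (hbasis x).choose_spec.2 b hb
  -- difference estimate for the approximating sequence
  have hdiffQ : ∀ (x : X) (Jl K : ℕ), Jl ≤ K →
      ‖Qv e p (co x) K - Qv e p (co x) Jl‖
        ≤ 3 * ‖(∑ i ∈ range (p K), co x i • e i) - ∑ i ∈ range (p Jl), co x i • e i‖ := by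
    intro x Jl K hJK
    set a' : ℕ → ℝ := fun i => if i < p Jl then 0 else co x i with ha'
    have hz : ∀ j < Jl, cf p a' j = 0 := by
      intro j hj
      unfold cf
      have : ∑ i ∈ Ico (p j) (p (j + 1)), a' i = 0 := by
        apply Finset.sum_eq_zero
        intro i hi
        obtain ⟨h1, h2⟩ := mem_Ico.mp hi
        have := hpmono.monotone (show j + 1 ≤ Jl by omega)
        simp only [ha']
        rw [if_pos (by omega)]
      rw [this, mul_zero]
    have heq : ∀ j, Jl ≤ j → cf p a' j = cf p (co x) j := by
      intro j hj
      unfold cf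
      congr 1
      refine Finset.sum_congr rfl fun i hi => ?_
      obtain ⟨h1, h2⟩ := mem_Ico.mp hi
      have := hpmono.monotone hj
      simp only [ha']
      rw [if_neg (by omega)]
    have h1 : Qv e p (co x) K - Qv e p (co x) Jl = Qv e p a' K := by
      calc Qv e p (co x) K - Qv e p (co x) Jl
          = ∑ j ∈ Ico Jl K, cf p (co x) j • ∑ i' ∈ Ico (p j) (p (j + 1)), e i' := by
            unfold Qv
            exact (Finset.sum_Ico_eq_sub _ hJK).symm
        _ = ∑ j ∈ Ico Jl K, cf p a' j • ∑ i' ∈ Ico (p j) (p (j + 1)), e i' :=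
            Finset.sum_congr rfl fun j hj => by rw [heq j (mem_Ico.mp hj).1]
        _ = (∑ j ∈ Ico 0 Jl, cf p a' j • ∑ i' ∈ Ico (p j) (p (j + 1)), e i')
            + ∑ j ∈ Ico Jl K, cf p a' j • ∑ i' ∈ Ico (p j) (p (j + 1)), e i' := by
            rw [Finset.sum_eq_zero (fun j hj =>
              by rw [hz j (mem_Ico.mp hj).2, zero_smul] :
                ∀ j ∈ Ico 0 Jl, cf p a' j • ∑ i' ∈ Ico (p j) (p (j + 1)), e i' = 0),
              zero_add]
        _ = ∑ j ∈ Ico 0 K, cf p a' j • ∑ i' ∈ Ico (p j) (p (j + 1)), e i' :=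
            Finset.sum_Ico_consecutive _ (Nat.zero_le Jl) hJK
        _ = Qv e p a' K := by unfold Qv; rw [range_eq_Ico]
    have h2 : ∑ i ∈ range (p K), a' i • e i
        = (∑ i ∈ range (p K), co x i • e i) - ∑ i ∈ range (p Jl), co x i • e i := by
      calc ∑ i ∈ range (p K), a' i • e i
          = ∑ i ∈ Ico 0 (p K), a' i • e i := by rw [range_eq_Ico]
        _ = (∑ i ∈ Ico 0 (p Jl), a' i • e i) + ∑ i ∈ Ico (p Jl) (p K), a' i • e i :=
            (Finset.sum_Ico_consecutive _ (Nat.zero_le _) (hpmono.monotone hJK)).symm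
        _ = ∑ i ∈ Ico (p Jl) (p K), a' i • e i := by
            rw [Finset.sum_eq_zero (fun i hi => by
              simp only [ha']
              rw [if_pos (mem_Ico.mp hi).2, zero_smul] :
                ∀ i ∈ Ico 0 (p Jl), a' i • e i = 0), zero_add]
        _ = ∑ i ∈ Ico (p Jl) (p K), co x i • e i := by
            refine Finset.sum_congr rfl fun i hi => ?_
            simp only [ha']
            rw [if_neg (by have := (mem_Ico.mp hi).1; omega)]
        _ = (∑ i ∈ range (p K), co x i • e i) - ∑ i ∈ range (p Jl), co x i • e i :=
            Finset.sum_Ico_eq_sub _ (hpmono.monotone hJK)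
    rw [h1, ← h2]
    exact key e hspread hpmono hp0 a' K
  -- convergence of the approximating sequence
  have hlim : ∀ x : X, ∃ y, Tendsto (fun K => Qv e p (co x) K) atTop (𝓝 y) := by
    intro x
    apply cauchySeq_tendsto_of_complete
    rw [Metric.cauchySeq_iff]
    intro ε hε
    obtain ⟨N₀, hN₀⟩ := Metric.cauchySeq_iff.mp (hten x).cauchySeq (ε / 4) (by linarith)
    refine ⟨N₀, fun K hK Jl hJl => ?_⟩
    have hb : ∀ Jm Km : ℕ, N₀ ≤ Jm → N₀ ≤ Km → Jm ≤ Km →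
        dist (Qv e p (co x) Km) (Qv e p (co x) Jm) < ε := by
      intro Jm Km h1 h2 h3
      rw [dist_eq_norm]
      refine lt_of_le_of_lt (hdiffQ x Jm Km h3) ?_
      have hd := hN₀ (p Km) (le_trans h2 (le_self_apply hpmono Km))
        (p Jm) (le_trans h1 (le_self_apply hpmono Jm))
      rw [dist_eq_norm] at hd
      linarith
    rcases le_total Jl K with h | h
    · exact hb Jl K hJl hK h
    · rw [dist_comm]
      exact hb K Jl hK hJl h
  set Qf : X → X := fun x => (hlim x).choose with hQf
  have hQten : ∀ x, Tendsto (fun K => Qv e p (co x) K) atTop (𝓝 (Qf x)) :=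
    fun x => (hlim x).choose_spec
  -- linearity of coefficients and of Qv
  have hco_add : ∀ x y : X, co (x + y) = fun i => co x i + co y i := by
    intro x y
    refine (huni (x + y) _ ?_).symm
    have := (hten x).add (hten y)
    simpa [add_smul, Finset.sum_add_distrib] using this
  have hco_smul : ∀ (c : ℝ) (x : X), co (c • x) = fun i => c * co x i := by
    intro c x
    refine (huni (c • x) _ ?_).symm
    have := (hten x).const_smul c
    simpa [Finset.smul_sum, smul_smul] using this
  have hQv_add : ∀ (a b : ℕ → ℝ) (J : ℕ),
      Qv e p (fun i => a i + b i) J = Qv e p a J + Qv e p b J := by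
    intro a b J
    unfold Qv
    rw [← Finset.sum_add_distrib]
    refine Finset.sum_congr rfl fun j _ => ?_
    rw [← add_smul]
    congr 1
    unfold cf
    rw [Finset.sum_add_distrib, mul_add]
  have hQv_smul : ∀ (c : ℝ) (a : ℕ → ℝ) (J : ℕ),
      Qv e p (fun i => c * a i) J = c • Qv e p a J := by
    intro c a J
    unfold Qv
    rw [Finset.smul_sum]
    refine Finset.sum_congr rfl fun j _ => ?_
    rw [smul_smul]
    congr 1
    unfold cf
    rw [← Finset.mul_sum]
    ring
  have hQf_add : ∀ x y, Qf (x + y) = Qf x + Qf y := by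
    intro x y
    refine tendsto_nhds_unique (hQten (x + y)) ?_
    have h1 := (hQten x).add (hQten y)
    have heq : (fun K => Qv e p (co x) K + Qv e p (co y) K)
        = fun K => Qv e p (co (x + y)) K := by
      funext K
      rw [hco_add x y, hQv_add]
    rwa [heq] at h1
  have hQf_smul : ∀ (c : ℝ) (x : X), Qf (c • x) = c • Qf x := by
    intro c x
    refine tendsto_nhds_unique (hQten (c • x)) ?_
    have h1 := (hQten x).const_smul c
    have heq : (fun K => c • Qv e p (co x) K) = fun K => Qv e p (co (c • x)) K := by
      funext K
      rw [hco_smul c x, hQv_smul]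
    rwa [heq] at h1
  have hQf_bound : ∀ x, ‖Qf x‖ ≤ 3 * ‖x‖ := by
    intro x
    have h1 : Tendsto (fun K => ‖Qv e p (co x) K‖) atTop (𝓝 ‖Qf x‖) := (hQten x).norm
    have hcomp : Tendsto (fun K => ∑ i ∈ range (p K), co x i • e i) atTop (𝓝 x) :=
      (hten x).comp hpmono.tendsto_atTop
    have h2 : Tendsto (fun K => 3 * ‖∑ i ∈ range (p K), co x i • e i‖) atTop
        (𝓝 (3 * ‖x‖)) := hcomp.norm.const_mul 3
    exact le_of_tendsto_of_tendsto' h1 h2 fun K => key e hspread hpmono hp0 (co x) K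
  -- the operator
  set Qlin : X →ₗ[ℝ] X :=
    { toFun := Qf, map_add' := hQf_add, map_smul' := hQf_smul } with hQlin
  refine ⟨LinearMap.mkContinuous Qlin 3 (fun x => hQf_bound x), ?_, ?_, ?_⟩
  · exact LinearMap.mkContinuous_norm_le _ (by norm_num) _
  · -- idempotence
    intro x
    show Qf (Qf x) = Qf x
    set bb : ℕ → ℝ := fun k => cf p (co x) (jdx p hpmono k) with hbb
    have hcf : ∀ j', cf p bb j' = cf p (co x) j' := by
      intro j'
      have hne : ((p (j' + 1) - p j' : ℕ) : ℝ) ≠ 0 :=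
        Nat.cast_ne_zero.mpr (by have := block_pos hpmono j'; omega)
      have hsums : ∑ k ∈ Ico (p j') (p (j' + 1)), bb k
          = ∑ k ∈ Ico (p j') (p (j' + 1)), co x k := by
        have hconst : ∀ k ∈ Ico (p j') (p (j' + 1)), bb k = cf p (co x) j' := by
          intro k hk
          obtain ⟨h1, h2⟩ := mem_Ico.mp hk
          simp only [hbb]
          rw [jdx_eq hpmono hp0 h1 h2]
        rw [Finset.sum_congr rfl hconst, Finset.sum_const, Nat.card_Ico, nsmul_eq_mul]
        unfold cf
        rw [← mul_assoc, mul_inv_cancel₀ hne, one_mul]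
      unfold cf
      rw [hsums]
    have htendb : Tendsto (fun N => ∑ k ∈ range N, bb k • e k) atTop (𝓝 (Qf x)) := by
      rw [Metric.tendsto_atTop]
      intro ε hε
      obtain ⟨J₁, hJ₁⟩ := Metric.tendsto_atTop.mp (hQten x) (ε / 2) (by linarith)
      obtain ⟨N₂, hN₂⟩ := Metric.cauchySeq_iff.mp (hten x).cauchySeq (ε / 8) (by linarith)
      refine ⟨p (max J₁ N₂), fun N hN => ?_⟩
      have hN1 : p (jdx p hpmono N) ≤ N := jdx_le hpmono hp0 N
      have hN2 : N < p (jdx p hpmono N + 1) := jdx_lt hpmono N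
      have hjge : max J₁ N₂ < jdx p hpmono N + 1 := by
        by_contra hcon
        push_neg at hcon
        have := hpmono.monotone hcon
        omega
      have hJ1j : J₁ ≤ jdx p hpmono N := by
        have := le_max_left J₁ N₂; omega
      have hN2j : N₂ ≤ jdx p hpmono N := by
        have := le_max_right J₁ N₂; omega
      set j := jdx p hpmono N with hjdef
      -- split the partial sum
      have hsplit : ∑ k ∈ range N, bb k • e k
          = (∑ k ∈ range (p j), bb k • e k) + ∑ k ∈ Ico (p j) N, bb k • e k := by
        rw [range_eq_Ico, range_eq_Ico]
        exact (Finset.sum_Ico_consecutive _ (Nat.zero_le _) hN1).symm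
      have hfirst : ∑ k ∈ range (p j), bb k • e k = Qv e p (co x) j :=
        (Qv_eq_sum e hpmono hp0 (co x) j).symm
      have hsecond : ∑ k ∈ Ico (p j) N, bb k • e k
          = cf p (co x) j • ∑ k ∈ Ico (p j) N, e k := by
        rw [Finset.smul_sum]
        refine Finset.sum_congr rfl fun k hk => ?_
        obtain ⟨hk1, hk2⟩ := mem_Ico.mp hk
        simp only [hbb]
        rw [jdx_eq hpmono hp0 hk1 (by omega)]
      -- the tail bound
      set aa : ℕ → ℝ := fun i => if p j ≤ i ∧ i < p (j + 1) then co x i else 0 with haa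
      have hQvaa : Qv e p aa (j + 1)
          = cf p (co x) j • ∑ k ∈ Ico (p j) (p (j + 1)), e k := by
        unfold Qv
        rw [Finset.sum_range_succ]
        rw [Finset.sum_eq_zero (fun j' hj' => ?_), zero_add]
        · congr 1
          unfold cf
          congr 1
          refine Finset.sum_congr rfl fun i hi => ?_
          obtain ⟨h1, h2⟩ := mem_Ico.mp hi
          simp only [haa]
          rw [if_pos ⟨h1, h2⟩]
        · have hj'j : j' < j := mem_range.mp hj'
          have : cf p aa j' = 0 := by
            unfold cf
            rw [Finset.sum_eq_zero (fun i hi => ?_), mul_zero]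
            obtain ⟨h1, h2⟩ := mem_Ico.mp hi
            have := hpmono.monotone (show j' + 1 ≤ j by omega)
            simp only [haa]
            rw [if_neg (by omega)]
          rw [this, zero_smul]
      have haasum : ∑ i ∈ range (p (j + 1)), aa i • e i
          = (∑ i ∈ range (p (j + 1)), co x i • e i) - ∑ i ∈ range (p j), co x i • e i := by
        rw [← Finset.sum_Ico_eq_sub (fun i => co x i • e i)
          (hpmono.monotone (Nat.le_succ j))]
        rw [range_eq_Ico, ← Finset.sum_Ico_consecutive (fun i => aa i • e i)
          (Nat.zero_le (p j)) (hpmono.monotone (Nat.le_succ j))]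
        rw [Finset.sum_eq_zero (fun i hi => ?_), zero_add]
        · refine Finset.sum_congr rfl fun i hi => ?_
          obtain ⟨h1, h2⟩ := mem_Ico.mp hi
          simp only [haa]
          rw [if_pos ⟨h1, h2⟩]
        · obtain ⟨h1, h2⟩ := mem_Ico.mp hi
          simp only [haa]
          rw [if_neg (by omega), zero_smul]
      have htail : ‖∑ k ∈ Ico (p j) N, bb k • e k‖
          ≤ 3 * ‖(∑ i ∈ range (p (j + 1)), co x i • e i)
                - ∑ i ∈ range (p j), co x i • e i‖ := by
        rw [hsecond]
        have hpb : ‖∑ k ∈ Ico (p j) N, e k‖ ≤ ‖∑ k ∈ Ico (p j) (p (j + 1)), e k‖ := by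
          rw [Finset.sum_Ico_eq_sum_range, Finset.sum_Ico_eq_sum_range]
          exact pblock e hspread hbi (by omega)
        calc ‖cf p (co x) j • ∑ k ∈ Ico (p j) N, e k‖
            = ‖cf p (co x) j‖ * ‖∑ k ∈ Ico (p j) N, e k‖ := norm_smul _ _
          _ ≤ ‖cf p (co x) j‖ * ‖∑ k ∈ Ico (p j) (p (j + 1)), e k‖ := by
              exact mul_le_mul_of_nonneg_left hpb (norm_nonneg _)
          _ = ‖cf p (co x) j • ∑ k ∈ Ico (p j) (p (j + 1)), e k‖ := (norm_smul _ _).symm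
          _ = ‖Qv e p aa (j + 1)‖ := by rw [hQvaa]
          _ ≤ 3 * ‖∑ i ∈ range (p (j + 1)), aa i • e i‖ :=
              key e hspread hpmono hp0 aa (j + 1)
          _ = 3 * ‖(∑ i ∈ range (p (j + 1)), co x i • e i)
                - ∑ i ∈ range (p j), co x i • e i‖ := by rw [haasum]
      -- put the pieces together
      have hQdist : dist (Qv e p (co x) j) (Qf x) < ε / 2 := hJ₁ j hJ1j
      have hSdist : ‖(∑ i ∈ range (p (j + 1)), co x i • e i)
          - ∑ i ∈ range (p j), co x i • e i‖ < ε / 8 := by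
        rw [← dist_eq_norm]
        apply hN₂
        · exact le_trans (by omega : N₂ ≤ j + 1) (le_self_apply hpmono (j + 1))
        · exact le_trans hN2j (le_self_apply hpmono j)
      rw [dist_eq_norm, hsplit, hfirst]
      calc ‖(Qv e p (co x) j + ∑ k ∈ Ico (p j) N, bb k • e k) - Qf x‖
          = ‖(Qv e p (co x) j - Qf x) + ∑ k ∈ Ico (p j) N, bb k • e k‖ := by
            rw [add_sub_right_comm]
        _ ≤ ‖Qv e p (co x) j - Qf x‖ + ‖∑ k ∈ Ico (p j) N, bb k • e k‖ := norm_add_le _ _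
        _ < ε := by
            rw [← dist_eq_norm] at *
            have := htail
            linarith
    have hbbco : bb = co (Qf x) := huni (Qf x) bb htendb
    have hQvsame : ∀ K, Qv e p (co (Qf x)) K = Qv e p (co x) K := by
      intro K
      rw [← hbbco]
      unfold Qv
      exact Finset.sum_congr rfl fun j _ => by rw [hcf j]
    have hten2 : Tendsto (fun K => Qv e p (co (Qf x)) K) atTop (𝓝 (Qf x)) :=
      (hQten x).congr fun K => (hQvsame K).symm
    exact tendsto_nhds_unique (hQten (Qf x)) hten2
  · -- action on basis vectors
    intro j i hi
    obtain ⟨hi1, hi2⟩ := mem_Ico.mp hi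
    show Qf (e i) = _
    have hδ : co (e i) = fun k => if k = i then (1 : ℝ) else 0 := by
      refine (huni (e i) _ ?_).symm
      have hev : ∀ᶠ N in atTop,
          e i = ∑ k ∈ range N, (if k = i then (1 : ℝ) else 0) • e k := by
        filter_upwards [eventually_ge_atTop (i + 1)] with N hN
        have h1 : ∑ k ∈ range N, (if k = i then (1 : ℝ) else 0) • e k
            = ∑ k ∈ range N, (if k = i then e k else 0) := by
          refine Finset.sum_congr rfl fun k _ => ?_
          split_ifs <;> simp
        rw [h1, Finset.sum_ite_eq' (range N) i (fun k => e k),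
          if_pos (mem_range.mpr (by omega))]
      exact tendsto_const_nhds.congr' hev
    have hval : ∀ K, j < K → Qv e p (co (e i)) K
        = (((p (j + 1) - p j : ℕ) : ℝ))⁻¹ • ∑ i' ∈ Ico (p j) (p (j + 1)), e i' := by
      intro K hK
      unfold Qv
      rw [Finset.sum_eq_single j]
      · have hsum1 : ∑ i' ∈ Ico (p j) (p (j + 1)), co (e i) i' = 1 := by
          rw [hδ]
          rw [Finset.sum_ite_eq' (Ico (p j) (p (j + 1))) i (fun _ => (1 : ℝ)), if_pos hi]
        unfold cf
        rw [hsum1, mul_one]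
      · intro j' hj' hne
        have hzero : ∑ i' ∈ Ico (p j') (p (j' + 1)), co (e i) i' = 0 := by
          rw [hδ]
          apply Finset.sum_eq_zero
          intro k hk
          obtain ⟨hk1, hk2⟩ := mem_Ico.mp hk
          have hki : k ≠ i := by
            intro hcon
            subst hcon
            rcases lt_or_gt_of_ne hne with h | h
            · have := hpmono.monotone (show j' + 1 ≤ j by omega); omega
            · have := hpmono.monotone (show j + 1 ≤ j' by omega); omega
          rw [if_neg hki]
        unfold cf
        rw [hzero, mul_zero, zero_smul]
      · intro hcon
        exact absurd (mem_range.mpr hK) hcon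
    have hconst : Tendsto (fun K => Qv e p (co (e i)) K) atTop
        (𝓝 ((((p (j + 1) - p j : ℕ) : ℝ))⁻¹ • ∑ i' ∈ Ico (p j) (p (j + 1)), e i')) := by
      apply tendsto_const_nhds.congr'
      filter_upwards [eventually_ge_atTop (j + 1)] with K hK
      exact (hval K (by omega)).symm
    exact tendsto_nhds_unique (hQten (e i)) hconst
end

section
/- Let (e_i) be a normalized conditional (i.e. not unconditional) spreading Schauder basis of a Banach space X, with difference sequence d_1 = e_1, d_i = e_i − e_{i−1} for i ≥ 2. Let D be the closed linear span of (d_{2n})_{n≥1} and Y the closed linear span of (e_{2n−1} + e_{2n})_{n≥1}. Then X is isomorphic to the direct sum D ⊕ Y, and Y is isomorphic to X; in particular X is isomorphic to D ⊕ X. -/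
open Filter Finset Topology NormedSpace
open scoped NNReal

namespace SpreadAux
variable {X : Type} [NormedAddCommGroup X] [NormedSpace ℝ X]

def spSum (e : ℕ → X) (a : ℕ → ℝ) (k : ℕ) (u : ℕ → ℕ) : X :=
  ∑ i ∈ Finset.range k, a i • e (u i)
def Gsum (e : ℕ → X) (a : ℕ → ℝ) (k : ℕ) : X :=
  ∑ n ∈ Finset.range k, a n • (e (2 * n) + e (2 * n + 1))
def zf (b : ℕ → ℝ) : ℕ → ℝ := fun j => if j % 2 = 0 then b (j / 2) else -(b (j / 2))
def aev (a : ℕ → ℝ) : ℕ → ℝ := fun n => a (2 * n)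
def aod (a : ℕ → ℝ) : ℕ → ℝ := fun n => a (2 * n + 1)
def cc (a : ℕ → ℝ) : ℕ → ℝ := fun n => a (2 * n + 1) - a (2 * n)
def bb (a : ℕ → ℝ) : ℕ → ℝ := fun j => a (j / 2)
def pσ : ℕ → ℕ := fun j => if j % 2 = 0 then j + 1 else j - 1
def u1 : ℕ → ℕ := fun j => 5 * (j / 2) + j % 2
def u2 : ℕ → ℕ := fun j => 5 * (j / 2) + 2 + j % 2
def ps : ℕ → ℕ := fun j => 5 * (j / 2) + (if j % 2 = 0 then 0 else 3)
def ps' : ℕ → ℕ := fun j => 5 * (j / 2) + (if j % 2 = 0 then 1 else 3)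
def pt : ℕ → ℕ := fun j => 5 * (j / 2) + (if j % 2 = 0 then 0 else 2)
def u3 : ℕ → ℕ := fun j => 4 * (j / 2) + (if j % 2 = 0 then 0 else 2)
def pr : ℕ → ℕ := fun j => 4 * (j / 2) + (if j % 2 = 0 then 0 else 1)
def pr' : ℕ → ℕ := fun j => 4 * (j / 2) + (if j % 2 = 0 then 1 else 2)

lemma hu1 : StrictMono u1 := strictMono_nat_of_lt_succ (fun n => by unfold u1; omega)
lemma hu2 : StrictMono u2 := strictMono_nat_of_lt_succ (fun n => by unfold u2; omega)
lemma hps : StrictMono ps := strictMono_nat_of_lt_succ (fun n => by unfold ps; split_ifs <;> omega)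
lemma hps' : StrictMono ps' := strictMono_nat_of_lt_succ (fun n => by unfold ps'; split_ifs <;> omega)
lemma hpt : StrictMono pt := strictMono_nat_of_lt_succ (fun n => by unfold pt; split_ifs <;> omega)
lemma hu3 : StrictMono u3 := strictMono_nat_of_lt_succ (fun n => by unfold u3; split_ifs <;> omega)
lemma hpr : StrictMono pr := strictMono_nat_of_lt_succ (fun n => by unfold pr; split_ifs <;> omega)
lemma hpr' : StrictMono pr' := strictMono_nat_of_lt_succ (fun n => by unfold pr'; split_ifs <;> omega)
lemma hp2 : StrictMono (fun j => 2 * j) := strictMono_nat_of_lt_succ (fun n => by omega)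
lemma hp2' : StrictMono (fun j => 2 * j + 1) := strictMono_nat_of_lt_succ (fun n => by omega)

lemma pairSum {M : Type*} [AddCommMonoid M] (f : ℕ → M) (k : ℕ) :
    ∑ j ∈ Finset.range (2 * k), f j = ∑ n ∈ Finset.range k, (f (2 * n) + f (2 * n + 1)) := by
  induction k with
  | zero => simp
  | succ k ih =>
    rw [Nat.mul_succ, show 2 * k + 2 = (2 * k + 1) + 1 from rfl, Finset.sum_range_succ,
      Finset.sum_range_succ, ih, Finset.sum_range_succ]
    abel

section
variable (e : ℕ → X) (a : ℕ → ℝ) (k : ℕ)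

lemma I1 : spSum e a (2 * k) pσ = spSum e a (2 * k) id + spSum e (zf (cc a)) (2 * k) id := by
  unfold spSum
  rw [← Finset.sum_add_distrib, pairSum, pairSum (fun i => a i • e (id i) + zf (cc a) i • e (id i))]
  refine Finset.sum_congr rfl fun n _ => ?_
  have h0 : 2 * n % 2 = 0 := by omega
  have h1 : (2 * n + 1) % 2 = 1 := by omega
  have h2 : 2 * n / 2 = n := by omega
  have h3 : (2 * n + 1) / 2 = n := by omega
  have h4 : 2 * n + 1 - 1 = 2 * n := by omega
  simp only [pσ, zf, cc, id_eq, h0, h1, h2, h3, h4, if_true, reduceCtorEq, if_false, one_ne_zero]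
  module

lemma I2 (u : ℕ → ℕ) :
    spSum e (zf (cc a)) (2 * k) u = spSum e (zf (aod a)) (2 * k) u - spSum e (zf (aev a)) (2 * k) u := by
  unfold spSum
  rw [← Finset.sum_sub_distrib]
  refine Finset.sum_congr rfl fun j _ => ?_
  unfold zf cc aod aev
  split_ifs <;> module

lemma I3 : spSum e (zf (aev a)) (2 * k) u1 = spSum e a (2 * k) ps - spSum e a (2 * k) ps' := by
  unfold spSum
  rw [← Finset.sum_sub_distrib, pairSum, pairSum (fun i => a i • e (ps i) - a i • e (ps' i))]
  refine Finset.sum_congr rfl fun n _ => ?_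
  have h0 : 2 * n % 2 = 0 := by omega
  have h1 : (2 * n + 1) % 2 = 1 := by omega
  have h2 : 2 * n / 2 = n := by omega
  have h3 : (2 * n + 1) / 2 = n := by omega
  simp only [zf, aev, u1, ps, ps', h0, h1, h2, h3, if_true, if_false, one_ne_zero, reduceCtorEq]
  module

lemma I4 : spSum e (zf (aod a)) (2 * k) u2 = spSum e a (2 * k) pt - spSum e a (2 * k) ps := by
  unfold spSum
  rw [← Finset.sum_sub_distrib, pairSum, pairSum (fun i => a i • e (pt i) - a i • e (ps i))]
  refine Finset.sum_congr rfl fun n _ => ?_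
  have h0 : 2 * n % 2 = 0 := by omega
  have h1 : (2 * n + 1) % 2 = 1 := by omega
  have h2 : 2 * n / 2 = n := by omega
  have h3 : (2 * n + 1) / 2 = n := by omega
  simp only [zf, aod, u2, pt, ps, h0, h1, h2, h3, if_true, if_false, one_ne_zero, reduceCtorEq]
  module

lemma I5 : spSum e (zf a) (2 * k) u3 = spSum e (bb a) (2 * k) pr - spSum e (bb a) (2 * k) pr' := by
  unfold spSum
  rw [← Finset.sum_sub_distrib, pairSum, pairSum (fun i => bb a i • e (pr i) - bb a i • e (pr' i))]
  refine Finset.sum_congr rfl fun n _ => ?_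
  have h0 : 2 * n % 2 = 0 := by omega
  have h1 : (2 * n + 1) % 2 = 1 := by omega
  have h2 : 2 * n / 2 = n := by omega
  have h3 : (2 * n + 1) / 2 = n := by omega
  simp only [zf, bb, u3, pr, pr', h0, h1, h2, h3, if_true, if_false, one_ne_zero, reduceCtorEq]
  module

lemma I6 : spSum e (bb a) (2 * k) id = Gsum e a k := by
  unfold spSum Gsum
  rw [pairSum]
  refine Finset.sum_congr rfl fun n _ => ?_
  have h2 : 2 * n / 2 = n := by omega
  have h3 : (2 * n + 1) / 2 = n := by omega
  simp only [bb, id_eq, h2, h3]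
  module

lemma I7 : spSum e (zf a) (2 * k) id
    = spSum e a k (fun j => 2 * j) - spSum e a k (fun j => 2 * j + 1) := by
  unfold spSum
  rw [← Finset.sum_sub_distrib, pairSum]
  refine Finset.sum_congr rfl fun n _ => ?_
  have h0 : 2 * n % 2 = 0 := by omega
  have h1 : (2 * n + 1) % 2 = 1 := by omega
  have h2 : 2 * n / 2 = n := by omega
  have h3 : (2 * n + 1) / 2 = n := by omega
  simp only [zf, id_eq, h0, h1, h2, h3, if_true, if_false, one_ne_zero, reduceCtorEq]
  module

lemma I8 : Gsum e a k = spSum e a k (fun j => 2 * j) + spSum e a k (fun j => 2 * j + 1) := by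
  unfold spSum Gsum
  rw [← Finset.sum_add_distrib]
  refine Finset.sum_congr rfl fun n _ => ?_
  module

end

lemma spSum_pad (e : ℕ → X) (a : ℕ → ℝ) (m : ℕ) (u : ℕ → ℕ) :
    spSum e (fun i => if i < m then a i else 0) (2 * m) u = spSum e a m u := by
  unfold spSum
  rw [← Finset.sum_subset (Finset.range_subset_range.2 (by omega : m ≤ 2 * m))]
  · exact Finset.sum_congr rfl fun i hi => by simp [Finset.mem_range.1 hi]
  · intro i _ hi
    have h : ¬ i < m := by simpa using hi
    simp [h]

/-- The master norm bounds derived from the spreading property. -/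
lemma masterBounds (e : ℕ → X)
    (hsp : ∀ n : ℕ → ℕ, StrictMono n → ∃ C : ℝ, 1 ≤ C ∧ ∀ (k : ℕ) (a : ℕ → ℝ),
      ‖spSum e a k id‖ ≤ C * ‖spSum e a k n‖ ∧ ‖spSum e a k n‖ ≤ C * ‖spSum e a k id‖) :
    ∃ MT K CW : ℝ, 0 < MT ∧ 0 < K ∧ 0 < CW ∧
      (∀ (m : ℕ) (a : ℕ → ℝ), ‖spSum e a m pσ‖ ≤ MT * ‖spSum e a m id‖) ∧
      (∀ (k : ℕ) (a : ℕ → ℝ), ‖spSum e a k id‖ ≤ K * ‖Gsum e a k‖) ∧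
      (∀ (k : ℕ) (a : ℕ → ℝ), ‖Gsum e a k‖ ≤ CW * ‖spSum e a k id‖) := by
  obtain ⟨C1, hC1, H1⟩ := hsp u1 hu1
  obtain ⟨C2, hC2, H2⟩ := hsp u2 hu2
  obtain ⟨Cs, hCs, Hs⟩ := hsp ps hps
  obtain ⟨Cs', hCs', Hs'⟩ := hsp ps' hps'
  obtain ⟨Ct, hCt, Ht⟩ := hsp pt hpt
  obtain ⟨C3, hC3, H3⟩ := hsp u3 hu3
  obtain ⟨Cr, hCr, Hr⟩ := hsp pr hpr
  obtain ⟨Cr', hCr', Hr'⟩ := hsp pr' hpr'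
  obtain ⟨Cp, hCp, Hp⟩ := hsp (fun j => 2 * j) hp2
  obtain ⟨Cp', hCp', Hp'⟩ := hsp (fun j => 2 * j + 1) hp2'
  -- even-length swap bound
  have swapEven : ∀ (k : ℕ) (a : ℕ → ℝ),
      ‖spSum e a (2 * k) pσ‖ ≤ (1 + C1 * (C1 * C2 * (Ct + Cs) + Cs + Cs')) * ‖spSum e a (2 * k) id‖ := by
    intro k a
    set N := ‖spSum e a (2 * k) id‖ with hN
    have hN0 : 0 ≤ N := norm_nonneg _
    have hZe : ‖spSum e (zf (aev a)) (2 * k) u1‖ ≤ (Cs + Cs') * N := by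
      rw [I3]
      calc ‖spSum e a (2 * k) ps - spSum e a (2 * k) ps'‖
          ≤ ‖spSum e a (2 * k) ps‖ + ‖spSum e a (2 * k) ps'‖ := norm_sub_le _ _
        _ ≤ Cs * N + Cs' * N := add_le_add (Hs (2 * k) a).2 (Hs' (2 * k) a).2
        _ = (Cs + Cs') * N := by ring
    have hZo : ‖spSum e (zf (aod a)) (2 * k) u1‖ ≤ C1 * C2 * (Ct + Cs) * N := by
      calc ‖spSum e (zf (aod a)) (2 * k) u1‖
          ≤ C1 * ‖spSum e (zf (aod a)) (2 * k) id‖ := (H1 (2 * k) (zf (aod a))).2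
        _ ≤ C1 * (C2 * ‖spSum e (zf (aod a)) (2 * k) u2‖) := by
            have := (H2 (2 * k) (zf (aod a))).1
            gcongr <;> linarith
        _ ≤ C1 * (C2 * ((Ct + Cs) * N)) := by
            have : ‖spSum e (zf (aod a)) (2 * k) u2‖ ≤ (Ct + Cs) * N := by
              rw [I4]
              calc ‖spSum e a (2 * k) pt - spSum e a (2 * k) ps‖
                  ≤ ‖spSum e a (2 * k) pt‖ + ‖spSum e a (2 * k) ps‖ := norm_sub_le _ _
                _ ≤ Ct * N + Cs * N := add_le_add (Ht (2 * k) a).2 (Hs (2 * k) a).2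
                _ = (Ct + Cs) * N := by ring
            gcongr <;> linarith
        _ = C1 * C2 * (Ct + Cs) * N := by ring
    have hZ : ‖spSum e (zf (cc a)) (2 * k) id‖ ≤ C1 * (C1 * C2 * (Ct + Cs) + Cs + Cs') * N := by
      calc ‖spSum e (zf (cc a)) (2 * k) id‖
          ≤ C1 * ‖spSum e (zf (cc a)) (2 * k) u1‖ := (H1 (2 * k) (zf (cc a))).1
        _ = C1 * ‖spSum e (zf (aod a)) (2 * k) u1 - spSum e (zf (aev a)) (2 * k) u1‖ := by rw [I2]
        _ ≤ C1 * (‖spSum e (zf (aod a)) (2 * k) u1‖ + ‖spSum e (zf (aev a)) (2 * k) u1‖) := by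
            have := norm_sub_le (spSum e (zf (aod a)) (2 * k) u1) (spSum e (zf (aev a)) (2 * k) u1)
            gcongr <;> linarith
        _ ≤ C1 * (C1 * C2 * (Ct + Cs) * N + (Cs + Cs') * N) := by
            gcongr <;> linarith
        _ = C1 * (C1 * C2 * (Ct + Cs) + Cs + Cs') * N := by ring
    calc ‖spSum e a (2 * k) pσ‖
        = ‖spSum e a (2 * k) id + spSum e (zf (cc a)) (2 * k) id‖ := by rw [I1]
      _ ≤ N + ‖spSum e (zf (cc a)) (2 * k) id‖ := norm_add_le _ _
      _ ≤ N + C1 * (C1 * C2 * (Ct + Cs) + Cs + Cs') * N := by linarith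
      _ = (1 + C1 * (C1 * C2 * (Ct + Cs) + Cs + Cs')) * N := by ring
  have c1 : (0:ℝ) < C1 := lt_of_lt_of_le one_pos hC1
  have c2 : (0:ℝ) < C2 := lt_of_lt_of_le one_pos hC2
  have c3 : (0:ℝ) < C3 := lt_of_lt_of_le one_pos hC3
  have csp : (0:ℝ) < Cs := lt_of_lt_of_le one_pos hCs
  have csp' : (0:ℝ) < Cs' := lt_of_lt_of_le one_pos hCs'
  have ctp : (0:ℝ) < Ct := lt_of_lt_of_le one_pos hCt
  have crp : (0:ℝ) < Cr := lt_of_lt_of_le one_pos hCr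
  have crp' : (0:ℝ) < Cr' := lt_of_lt_of_le one_pos hCr'
  have cpp : (0:ℝ) < Cp := lt_of_lt_of_le one_pos hCp
  have cpp' : (0:ℝ) < Cp' := lt_of_lt_of_le one_pos hCp'
  have hA : (0:ℝ) < C1 * C2 * (Ct + Cs) := mul_pos (mul_pos c1 c2) (add_pos ctp csp)
  have hMT : (0:ℝ) < 1 + C1 * (C1 * C2 * (Ct + Cs) + Cs + Cs') := by
    have := mul_pos c1 (show (0:ℝ) < C1 * C2 * (Ct + Cs) + Cs + Cs' by linarith)
    linarith
  have hK : (0:ℝ) < Cp * (1 + C3 * (Cr + Cr')) / 2 := by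
    have := mul_pos c3 (add_pos crp crp')
    have := mul_pos cpp (show (0:ℝ) < 1 + C3 * (Cr + Cr') by linarith)
    linarith
  refine ⟨1 + C1 * (C1 * C2 * (Ct + Cs) + Cs + Cs'), Cp * (1 + C3 * (Cr + Cr')) / 2,
    Cp + Cp', hMT, hK, by linarith, ?_, ?_, ?_⟩
  · -- swap bound, arbitrary length, via padding
    intro m a
    have h1 := swapEven m (fun i => if i < m then a i else 0)
    rwa [spSum_pad, spSum_pad] at h1
  · -- lower bound for Gsum
    intro k a
    set G := ‖Gsum e a k‖ with hG
    have hG0 : 0 ≤ G := norm_nonneg _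
    have hZ' : ‖spSum e (zf a) (2 * k) id‖ ≤ C3 * (Cr + Cr') * G := by
      calc ‖spSum e (zf a) (2 * k) id‖
          ≤ C3 * ‖spSum e (zf a) (2 * k) u3‖ := (H3 (2 * k) (zf a)).1
        _ = C3 * ‖spSum e (bb a) (2 * k) pr - spSum e (bb a) (2 * k) pr'‖ := by rw [I5]
        _ ≤ C3 * (‖spSum e (bb a) (2 * k) pr‖ + ‖spSum e (bb a) (2 * k) pr'‖) := by
            have := norm_sub_le (spSum e (bb a) (2 * k) pr) (spSum e (bb a) (2 * k) pr')
            gcongr <;> linarith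
        _ ≤ C3 * (Cr * ‖spSum e (bb a) (2 * k) id‖ + Cr' * ‖spSum e (bb a) (2 * k) id‖) := by
            have h1 := (Hr (2 * k) (bb a)).2
            have h2 := (Hr' (2 * k) (bb a)).2
            gcongr <;> linarith
        _ = C3 * (Cr + Cr') * ‖spSum e (bb a) (2 * k) id‖ := by ring
        _ = C3 * (Cr + Cr') * G := by rw [I6]
    have htwo : (2 : ℝ) • spSum e a k (fun j => 2 * j) = Gsum e a k + spSum e (zf a) (2 * k) id := by
      rw [I7, I8]; module
    have hp2norm : ‖spSum e a k (fun j => 2 * j)‖ ≤ (G + C3 * (Cr + Cr') * G) / 2 := by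
      have h2 : ‖(2 : ℝ) • spSum e a k (fun j => 2 * j)‖ = 2 * ‖spSum e a k (fun j => 2 * j)‖ := by
        rw [norm_smul]; simp
      have h3 : ‖Gsum e a k + spSum e (zf a) (2 * k) id‖
          ≤ G + C3 * (Cr + Cr') * G := le_trans (norm_add_le _ _) (by linarith)
      rw [htwo] at h2
      linarith
    calc ‖spSum e a k id‖
        ≤ Cp * ‖spSum e a k (fun j => 2 * j)‖ := (Hp k a).1
      _ ≤ Cp * ((G + C3 * (Cr + Cr') * G) / 2) := by gcongr
      _ = Cp * (1 + C3 * (Cr + Cr')) / 2 * G := by ring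
  · -- upper bound for Gsum
    intro k a
    calc ‖Gsum e a k‖
        = ‖spSum e a k (fun j => 2 * j) + spSum e a k (fun j => 2 * j + 1)‖ := by rw [I8]
      _ ≤ ‖spSum e a k (fun j => 2 * j)‖ + ‖spSum e a k (fun j => 2 * j + 1)‖ := norm_add_le _ _
      _ ≤ Cp * ‖spSum e a k id‖ + Cp' * ‖spSum e a k id‖ := add_le_add (Hp k a).2 (Hp' k a).2
      _ = (Cp + Cp') * ‖spSum e a k id‖ := by ring
end SpreadAux


/-- `e` is spreading: it is equivalent to each of its subsequences. -/
def IsSpreading {X : Type} [NormedAddCommGroup X] [NormedSpace ℝ X] (e : ℕ → X) : Prop :=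
  ∀ n : ℕ → ℕ, StrictMono n → ∃ C : ℝ, 1 ≤ C ∧ ∀ (k : ℕ) (a : ℕ → ℝ),
    ‖∑ i ∈ Finset.range k, a i • e i‖ ≤ C * ‖∑ i ∈ Finset.range k, a i • e (n i)‖ ∧
    ‖∑ i ∈ Finset.range k, a i • e (n i)‖ ≤ C * ‖∑ i ∈ Finset.range k, a i • e i‖

/-- A sequence is unconditional if sign changes of coefficients are uniformly bounded. -/
def IsUnconditionalSeq {X : Type} [NormedAddCommGroup X] [NormedSpace ℝ X] (x : ℕ → X) : Prop :=
  ∃ C : ℝ, 0 < C ∧ ∀ (k : ℕ) (a ε : ℕ → ℝ), (∀ i, ε i = 1 ∨ ε i = -1) →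
    ‖∑ i ∈ Finset.range k, (ε i * a i) • x i‖ ≤ C * ‖∑ i ∈ Finset.range k, a i • x i‖

theorem decomposition_D_oplus_X
    {X : Type} [NormedAddCommGroup X] [NormedSpace ℝ X] [CompleteSpace X]
    (e : ℕ → X) (hnorm : ∀ i, ‖e i‖ = 1) (hbasis : IsSchauderBasis e)
    (hspread : IsSpreading e) (hcond : ¬ IsUnconditionalSeq e)
    (d : ℕ → X) (hd0 : d 0 = e 0) (hd : ∀ i, d (i + 1) = e (i + 1) - e i) :
    Nonempty (X ≃L[ℝ]
        (↥((Submodule.span ℝ (Set.range fun n => d (2 * n + 1))).topologicalClosure) ×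
         ↥((Submodule.span ℝ (Set.range fun n => e (2 * n) + e (2 * n + 1))).topologicalClosure)) ) ∧
    Nonempty
      (↥((Submodule.span ℝ (Set.range fun n => e (2 * n) + e (2 * n + 1))).topologicalClosure)
        ≃L[ℝ] X) ∧
    Nonempty (X ≃L[ℝ]
        (↥((Submodule.span ℝ (Set.range fun n => d (2 * n + 1))).topologicalClosure) × X)) := by
  classical
  -- abbreviations
  set gfun : ℕ → X := fun n => e (2 * n) + e (2 * n + 1) with hgfun
  set dfun : ℕ → X := fun n => d (2 * n + 1) with hdfun
  set Y' : Submodule ℝ X := (Submodule.span ℝ (Set.range gfun)).topologicalClosure with hY'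
  set D' : Submodule ℝ X := (Submodule.span ℝ (Set.range dfun)).topologicalClosure with hD'
  set V : Submodule ℝ X := Submodule.span ℝ (Set.range e) with hV
  -- master norm bounds from the spreading hypothesis
  have hsp' : ∀ n : ℕ → ℕ, StrictMono n → ∃ C : ℝ, 1 ≤ C ∧ ∀ (k : ℕ) (a : ℕ → ℝ),
      ‖SpreadAux.spSum e a k id‖ ≤ C * ‖SpreadAux.spSum e a k n‖ ∧
      ‖SpreadAux.spSum e a k n‖ ≤ C * ‖SpreadAux.spSum e a k id‖ := by
    intro n hn
    obtain ⟨C, h1, h2⟩ := hspread n hn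
    exact ⟨C, h1, fun k a => by simpa [SpreadAux.spSum] using h2 k a⟩
  obtain ⟨MT, K, CW, hMT0, hK0, hCW0, HMT, HK, HCW⟩ := SpreadAux.masterBounds e hsp'
  -- linear independence
  have hli : LinearIndependent ℝ e := by
    rw [linearIndependent_iff']
    intro s g hsum i hi
    obtain ⟨a₀, _, hu⟩ := hbasis 0
    have h1 : Tendsto (fun n => ∑ j ∈ Finset.range n,
        (fun j => if j ∈ s then g j else 0) j • e j) atTop (𝓝 (0 : X)) := by
      apply tendsto_atTop_of_eventually_const (i₀ := s.sup id + 1)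
      intro n hn
      have hsub : s ⊆ Finset.range n := fun j hj =>
        Finset.mem_range.2 (by have := Finset.le_sup (f := id) hj; simp at this; omega)
      have h2 : ∑ j ∈ Finset.range n, (if j ∈ s then g j else 0) • e j
          = ∑ j ∈ s, (if j ∈ s then g j else 0) • e j :=
        (Finset.sum_subset hsub (fun x _ hx => by simp [hx])).symm
      rw [h2, Finset.sum_congr rfl (fun j hj => by rw [if_pos hj]), hsum]
    have h2 : Tendsto (fun n => ∑ j ∈ Finset.range n, (fun _ => (0:ℝ)) j • e j)
        atTop (𝓝 (0 : X)) := by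
      simpa using (tendsto_const_nhds : Tendsto (fun _ : ℕ => (0:X)) atTop (𝓝 0))
    have e1 := hu _ h1
    have e2 := hu _ h2
    have h3 : (fun j => if j ∈ s then g j else 0) = (fun _ => (0:ℝ)) := e1.trans e2.symm
    have h4 := congrFun h3 i
    simpa [hi] using h4
  -- density of the linear span
  have hdV : Dense (V : Set X) := by
    intro x
    obtain ⟨a, ha, -⟩ := hbasis x
    exact mem_closure_of_tendsto ha (Filter.Eventually.of_forall (fun n =>
      Submodule.sum_mem _ (fun i _ => Submodule.smul_mem _ _
        (Submodule.subset_span ⟨i, rfl⟩))))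
  have allX : ∀ (S : Set X), IsClosed S → (V : Set X) ⊆ S → ∀ x : X, x ∈ S := by
    intro S hS hsub x
    exact closure_minimal hsub hS (hdV x)
  -- basis of the span
  let bV : Module.Basis ℕ ℝ ↥V := Module.Basis.span hli
  have hbVi : ∀ i, (bV i : X) = e i := fun i => congrArg Subtype.val (Module.Basis.span_apply hli i)
  -- representation of elements of the span
  have repr : ∀ v : ↥V, ∃ (m : ℕ) (a : ℕ → ℝ), (v : X) = SpreadAux.spSum e a m id ∧
      v = ∑ i ∈ Finset.range m, a i • bV i := by
    intro v
    obtain ⟨c, hc⟩ := Finsupp.mem_span_range_iff_exists_finsupp.1 v.2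
    set m := c.support.sup id + 1 with hm
    have hsub : c.support ⊆ Finset.range m := fun j hj =>
      Finset.mem_range.2 (by have := Finset.le_sup (f := id) hj; simp at this; omega)
    have hval : (v : X) = ∑ i ∈ Finset.range m, c i • e i := by
      rw [← hc, Finsupp.sum]
      exact Finset.sum_subset hsub (fun x _ hx => by
        simp [Finsupp.notMem_support_iff.1 hx])
    refine ⟨m, c, by simpa [SpreadAux.spSum] using hval, ?_⟩
    have hco : ((∑ i ∈ Finset.range m, c i • bV i : ↥V) : X)
        = ∑ i ∈ Finset.range m, c i • e i := by
      rw [show ((∑ i ∈ Finset.range m, c i • bV i : ↥V) : X)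
        = V.subtype (∑ i ∈ Finset.range m, c i • bV i) from rfl]
      rw [map_sum]
      exact Finset.sum_congr rfl (fun i _ => by
        rw [map_smul]; rw [show V.subtype (bV i) = (bV i : X) from rfl, hbVi i])
    exact Subtype.ext (by rw [hco, ← hval])
  -- construction of bounded operators from finite bounds
  have mkOp : ∀ (t : ℕ → X) (Cb : ℝ),
      (∀ (m : ℕ) (a : ℕ → ℝ), ‖∑ i ∈ Finset.range m, a i • t i‖
        ≤ Cb * ‖SpreadAux.spSum e a m id‖) →
      ∃ F : X →L[ℝ] X, ∀ i, F (e i) = t i := by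
    intro t Cb hbound
    have hb : ∀ v : ↥V, ‖(bV.constr ℝ t) v‖ ≤ Cb * ‖v‖ := by
      intro v
      obtain ⟨m, a, hv1, hv2⟩ := repr v
      have h3 : (bV.constr ℝ t) v = ∑ i ∈ Finset.range m, a i • t i := by
        rw [hv2, map_sum]
        exact Finset.sum_congr rfl (fun i _ => by rw [map_smul, Module.Basis.constr_basis])
      rw [h3, show ‖v‖ = ‖(v : X)‖ from rfl, hv1]
      exact hbound m a
    let F0 : ↥V →L[ℝ] X := LinearMap.mkContinuous (bV.constr ℝ t) Cb hb
    have hdenseR : DenseRange ((V.subtypeL : ↥V →L[ℝ] X) : ↥V → X) := by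
      have h : Set.range ((V.subtypeL : ↥V →L[ℝ] X) : ↥V → X) = (V : Set X) :=
        Subtype.range_coe
      rw [DenseRange, h]; exact hdV
    refine ⟨F0.extend V.subtypeL,
      fun i => ?_⟩
    have hm : e i ∈ V := Submodule.subset_span ⟨i, rfl⟩
    have h1 : e i = V.subtypeL ⟨e i, hm⟩ := rfl
    rw [h1, ContinuousLinearMap.extend_eq _ hdenseR isometry_subtype_coe.isUniformInducing]
    have h2 : (⟨e i, hm⟩ : ↥V) = bV i := Subtype.ext (hbVi i).symm
    rw [h2]
    show (bV.constr ℝ t) (bV i) = t i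
    exact Module.Basis.constr_basis bV ℝ t i
  -- the pair-swap operator T and the doubling operator W
  obtain ⟨T, hTe⟩ := mkOp (fun i => e (SpreadAux.pσ i)) MT
    (fun m a => by simpa [SpreadAux.spSum] using HMT m a)
  obtain ⟨Wo, hWe⟩ := mkOp (fun i => e (2 * i) + e (2 * i + 1)) CW
    (fun m a => by simpa [SpreadAux.spSum, SpreadAux.Gsum] using HCW m a)
  -- evaluation on finite sums
  have evalV : ∀ (F : X →L[ℝ] X) (m : ℕ) (a : ℕ → ℝ),
      F (SpreadAux.spSum e a m id) = ∑ i ∈ Finset.range m, a i • F (e i) := by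
    intro F m a
    rw [SpreadAux.spSum, map_sum]
    exact Finset.sum_congr rfl (fun i _ => by rw [map_smul]; rfl)
  have memV : ∀ x, x ∈ (V : Set X) → ∃ (m : ℕ) (a : ℕ → ℝ),
      x = SpreadAux.spSum e a m id := by
    intro x hx
    obtain ⟨m, a, hv1, _⟩ := repr ⟨x, hx⟩
    exact ⟨m, a, hv1⟩
  -- operator extensionality from values on basis vectors
  have opExt : ∀ (f g : X →L[ℝ] X), (∀ i, f (e i) = g (e i)) → ∀ x, f x = g x := by
    intro f g h x
    refine allX {x : X | f x = g x} (isClosed_eq f.continuous g.continuous) ?_ x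
    intro y hy
    have hle : V ≤ LinearMap.eqLocus (f : X →ₗ[ℝ] X) (g : X →ₗ[ℝ] X) :=
      Submodule.span_le.2 (by rintro _ ⟨i, rfl⟩; exact h i)
    exact hle hy
  have memAll : ∀ (q : Submodule ℝ X) (F : X →L[ℝ] X), IsClosed (q : Set X) →
      (∀ i, F (e i) ∈ q) → ∀ x, F x ∈ q := by
    intro q F hq h x
    refine allX {x : X | F x ∈ q} (hq.preimage F.continuous) ?_ x
    intro y hy
    have hle : V ≤ Submodule.comap (F : X →ₗ[ℝ] X) q :=
      Submodule.span_le.2 (by rintro _ ⟨i, rfl⟩; exact h i)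
    exact hle hy
  have onClosure : ∀ (t : ℕ → X) (f g : X →L[ℝ] X), (∀ n, f (t n) = g (t n)) →
      ∀ y, y ∈ (Submodule.span ℝ (Set.range t)).topologicalClosure → f y = g y := by
    intro t f g h y hy
    have h1 : Submodule.span ℝ (Set.range t)
        ≤ LinearMap.eqLocus (f : X →ₗ[ℝ] X) (g : X →ₗ[ℝ] X) :=
      Submodule.span_le.2 (by rintro _ ⟨n, rfl⟩; exact h n)
    have h2 := Submodule.topologicalClosure_minimal _ h1
      (show IsClosed ((LinearMap.eqLocus (f : X →ₗ[ℝ] X) (g : X →ₗ[ℝ] X) : Submodule ℝ X) : Set X) from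
        isClosed_eq f.continuous g.continuous)
    exact h2 hy
  -- arithmetic facts about the pair swap
  have hσe : ∀ n, SpreadAux.pσ (2 * n) = 2 * n + 1 := fun n => by
    unfold SpreadAux.pσ; split_ifs <;> omega
  have hσo : ∀ n, SpreadAux.pσ (2 * n + 1) = 2 * n := fun n => by
    unfold SpreadAux.pσ; split_ifs <;> omega
  have hσσ : ∀ j, SpreadAux.pσ (SpreadAux.pσ j) = j := fun j => by
    unfold SpreadAux.pσ; split_ifs <;> omega
  -- T is an involution
  have hTT : ∀ x, T (T x) = x := by
    have := opExt (T.comp T) (ContinuousLinearMap.id ℝ X) (fun i => by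
      simp only [ContinuousLinearMap.comp_apply, ContinuousLinearMap.id_apply, hTe, hσσ])
    simpa using this
  -- the complementary projections
  set A : X →L[ℝ] X := (2⁻¹ : ℝ) • (ContinuousLinearMap.id ℝ X + T) with hAdef
  set B : X →L[ℝ] X := (2⁻¹ : ℝ) • (ContinuousLinearMap.id ℝ X - T) with hBdef
  have hAapp : ∀ x, A x = (2⁻¹ : ℝ) • (x + T x) := fun x => by
    simp [hAdef, ContinuousLinearMap.smul_apply, ContinuousLinearMap.add_apply]
  have hBapp : ∀ x, B x = (2⁻¹ : ℝ) • (x - T x) := fun x => by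
    simp [hBdef, ContinuousLinearMap.smul_apply, ContinuousLinearMap.sub_apply]
  have hABsum : ∀ x, B x + A x = x := by
    intro x; rw [hAapp, hBapp]; module
  -- values on generators
  have hdg : ∀ n, dfun n = e (2 * n + 1) - e (2 * n) := fun n => hd (2 * n)
  have hTg : ∀ n, T (gfun n) = gfun n := by
    intro n
    rw [hgfun]
    simp only [map_add, hTe, hσe, hσo]
    abel
  have hTd : ∀ n, T (dfun n) = -dfun n := by
    intro n
    rw [hdg n, map_sub]
    simp only [hTe, hσe, hσo]
    abel
  have hAg : ∀ n, A (gfun n) = gfun n := by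
    intro n; rw [hAapp, hTg]; module
  have hBg : ∀ n, B (gfun n) = 0 := by
    intro n; rw [hBapp, hTg]; simp
  have hAd : ∀ n, A (dfun n) = 0 := by
    intro n; rw [hAapp, hTd]; simp
  have hBd : ∀ n, B (dfun n) = dfun n := by
    intro n; rw [hBapp, hTd]; module
  -- membership of generators in the closures
  have hgY : ∀ n, gfun n ∈ Y' :=
    fun n => Submodule.le_topologicalClosure _ (Submodule.subset_span ⟨n, rfl⟩)
  have hdD : ∀ n, dfun n ∈ D' :=
    fun n => Submodule.le_topologicalClosure _ (Submodule.subset_span ⟨n, rfl⟩)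
  -- ranges of A and B
  have hAY : ∀ x, A x ∈ Y' := by
    refine memAll Y' A (Submodule.isClosed_topologicalClosure _) (fun i => ?_)
    rcases Nat.mod_two_eq_zero_or_one i with h | h
    · have hi : i = 2 * (i / 2) := by omega
      rw [hi, hAapp, hTe, hσe]
      exact Submodule.smul_mem _ _ (hgY (i / 2))
    · have hi : i = 2 * (i / 2) + 1 := by omega
      rw [hi, hAapp, hTe, hσo]
      have : e (2 * (i / 2) + 1) + e (2 * (i / 2)) = gfun (i / 2) := by rw [hgfun]; abel
      rw [this]
      exact Submodule.smul_mem _ _ (hgY (i / 2))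
  have hBD : ∀ x, B x ∈ D' := by
    refine memAll D' B (Submodule.isClosed_topologicalClosure _) (fun i => ?_)
    rcases Nat.mod_two_eq_zero_or_one i with h | h
    · have hi : i = 2 * (i / 2) := by omega
      rw [hi, hBapp, hTe, hσe]
      have : (2⁻¹ : ℝ) • (e (2 * (i / 2)) - e (2 * (i / 2) + 1))
          = (-(2⁻¹ : ℝ)) • dfun (i / 2) := by rw [hdg]; module
      rw [this]
      exact Submodule.smul_mem _ _ (hdD (i / 2))
    · have hi : i = 2 * (i / 2) + 1 := by omega
      rw [hi, hBapp, hTe, hσo]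
      have : (2⁻¹ : ℝ) • (e (2 * (i / 2) + 1) - e (2 * (i / 2)))
          = (2⁻¹ : ℝ) • dfun (i / 2) := by rw [hdg]
      rw [this]
      exact Submodule.smul_mem _ _ (hdD (i / 2))
  -- A, B behaviour on the two closures
  have hAfixY : ∀ y, y ∈ Y' → A y = y := by
    intro y hy
    have := onClosure gfun A (ContinuousLinearMap.id ℝ X) (fun n => by
      simpa using hAg n) y (by rwa [hY'] at hy)
    simpa using this
  have hBzeroY : ∀ y, y ∈ Y' → B y = 0 := by
    intro y hy
    have := onClosure gfun B 0 (fun n => by simpa using hBg n) y (by rwa [hY'] at hy)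
    simpa using this
  have hAzeroD : ∀ y, y ∈ D' → A y = 0 := by
    intro y hy
    have := onClosure dfun A 0 (fun n => by simpa using hAd n) y (by rwa [hD'] at hy)
    simpa using this
  have hBfixD : ∀ y, y ∈ D' → B y = y := by
    intro y hy
    have := onClosure dfun B (ContinuousLinearMap.id ℝ X) (fun n => by
      simpa using hBd n) y (by rwa [hD'] at hy)
    simpa using this
  -- the first equivalence
  let Φ : X →L[ℝ] ↥D' × ↥Y' := (B.codRestrict D' hBD).prod (A.codRestrict Y' hAY)
  let Ψ : ↥D' × ↥Y' →L[ℝ] X := (D'.subtypeL).coprod (Y'.subtypeL)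
  have h₁ : Function.LeftInverse Ψ Φ := by
    intro x
    show D'.subtypeL (B.codRestrict D' hBD x) + Y'.subtypeL (A.codRestrict Y' hAY x) = x
    simp only [Submodule.subtypeL_apply, ContinuousLinearMap.coe_codRestrict_apply]
    exact hABsum x
  have h₂ : Function.RightInverse Ψ Φ := by
    rintro ⟨u, v⟩
    have hu : B ((u : X) + (v : X)) = (u : X) := by
      rw [map_add, hBfixD _ u.2, hBzeroY _ v.2, add_zero]
    have hv : A ((u : X) + (v : X)) = (v : X) := by
      rw [map_add, hAzeroD _ u.2, hAfixY _ v.2, zero_add]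
    have : Ψ (u, v) = (u : X) + (v : X) := by
      simp [Ψ, ContinuousLinearMap.coprod_apply]
    refine Prod.ext ?_ ?_
    · exact Subtype.ext (by
        show B (Ψ (u, v)) = (u : X)
        rw [this, hu])
    · exact Subtype.ext (by
        show A (Ψ (u, v)) = (v : X)
        rw [this, hv])
  let CLE1 : X ≃L[ℝ] ↥D' × ↥Y' := ContinuousLinearEquiv.equivOfInverse Φ Ψ h₁ h₂
  -- the second equivalence
  have hWlow : ∀ x, ‖x‖ ≤ K * ‖Wo x‖ := by
    refine allX {x : X | ‖x‖ ≤ K * ‖Wo x‖}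
      (isClosed_le continuous_norm (continuous_const.mul (continuous_norm.comp Wo.continuous)))
      ?_
    intro y hy
    obtain ⟨m, a, rfl⟩ := memV y hy
    show ‖SpreadAux.spSum e a m id‖ ≤ K * ‖Wo (SpreadAux.spSum e a m id)‖
    rw [evalV]
    have hsum : ∑ i ∈ Finset.range m, a i • Wo (e i) = SpreadAux.Gsum e a m := by
      rw [SpreadAux.Gsum]
      exact Finset.sum_congr rfl (fun i _ => by rw [hWe])
    rw [hsum]
    exact HK m a
  have hWY : ∀ x, Wo x ∈ Y' := by
    refine memAll Y' Wo (Submodule.isClosed_topologicalClosure _) (fun i => ?_)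
    rw [hWe]
    exact hgY i
  let Wc : X →L[ℝ] ↥Y' := Wo.codRestrict Y' hWY
  have hker : LinearMap.ker (Wc : X →ₗ[ℝ] ↥Y') = ⊥ := by
    rw [LinearMap.ker_eq_bot']
    intro x hx
    have h0 : Wo x = 0 := congrArg Subtype.val hx
    have h1 := hWlow x
    rw [h0, norm_zero, mul_zero] at h1
    exact norm_le_zero_iff.1 h1
  have hanti : AntilipschitzWith (Real.toNNReal K) Wo :=
    Wo.antilipschitz_of_bound (fun x => by
      rw [Real.coe_toNNReal K hK0.le]; exact hWlow x)
  have hclosedR : IsClosed (Set.range Wo) := hanti.isClosed_range Wo.uniformContinuous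
  have hY'le : Y' ≤ LinearMap.range (Wo : X →ₗ[ℝ] X) := by
    refine Submodule.topologicalClosure_minimal _ ?_ ?_
    · refine Submodule.span_le.2 ?_
      rintro _ ⟨n, rfl⟩
      exact ⟨e n, hWe n⟩
    · have h : ((LinearMap.range (Wo : X →ₗ[ℝ] X)) : Set X) = Set.range Wo := by
        ext z; simp [LinearMap.mem_range]
      rw [h]; exact hclosedR
  have hrange : LinearMap.range (Wc : X →ₗ[ℝ] ↥Y') = ⊤ := by
    rw [LinearMap.range_eq_top]
    rintro ⟨y, hy⟩
    obtain ⟨x, hx⟩ := hY'le hy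
    exact ⟨x, Subtype.ext hx⟩
  haveI : CompleteSpace ↥Y' := (Submodule.isClosed_topologicalClosure _).completeSpace_coe
  let CLE2 : X ≃L[ℝ] ↥Y' := ContinuousLinearEquiv.ofBijective Wc hker hrange
  exact ⟨⟨CLE1⟩, ⟨CLE2.symm⟩,
    ⟨CLE1.trans ((ContinuousLinearEquiv.refl ℝ ↥D').prodCongr CLE2.symm)⟩⟩
end

section
/- (Gap Lemma) Let ε > 0, M ∈ ℕ, and K ≥ 1. Then there exists N = N(ε, M, K) ∈ ℕ such that: for any Banach space X, any finite sequences (x_l^1)_{l=1}^N, …, (x_l^M)_{l=1}^N in X each of which is K-equivalent to the unit vector basis of ℓ∞^N, and any functionals (f_l^1)_{l=1}^N, …, (f_l^M)_{l=1}^N in X* each of norm at most 1, there exist indices l_1, …, l_M ∈ {1,…,N} such that |f_{l_j}^j(x_{l_i}^i)| < ε for all i ≠ j. -/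
open Filter Finset Topology NormedSpace
open scoped NNReal

/-- A finite sequence `z` is `K`-equivalent to the unit vector basis of `ℓ∞^N`. -/
def KEquivLinftyUVB {X : Type} [NormedAddCommGroup X] [NormedSpace ℝ X]
    (N : ℕ) (K : ℝ) (z : Fin N → X) : Prop :=
  ∀ a : Fin N → ℝ,
    K⁻¹ * ((Finset.univ.sup fun l => ‖a l‖₊ : ℝ≥0) : ℝ) ≤ ‖∑ l, a l • z l‖ ∧
    ‖∑ l, a l • z l‖ ≤ K * ((Finset.univ.sup fun l => ‖a l‖₊ : ℝ≥0) : ℝ)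

lemma gap_sum_abs_le {X : Type} [NormedAddCommGroup X] [NormedSpace ℝ X]
    {N : ℕ} {K : ℝ} (hK : 1 ≤ K) {x : Fin N → X} (hx : KEquivLinftyUVB N K x)
    (f : StrongDual ℝ X) (hf : ‖f‖ ≤ 1) : ∑ a, |f (x a)| ≤ K := by
  classical
  set c : Fin N → ℝ := fun a => if 0 ≤ f (x a) then 1 else -1 with hc
  have h1 : ∀ a, c a * f (x a) = |f (x a)| := by
    intro a; rw [hc]; dsimp only; split_ifs with h
    · rw [one_mul, abs_of_nonneg h]
    · rw [neg_one_mul, abs_of_neg (lt_of_not_ge h)]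
  have h2 : ∑ a, |f (x a)| = f (∑ a, c a • x a) := by
    rw [map_sum]
    simp_rw [map_smul, smul_eq_mul, h1]
  have hsup : ((Finset.univ.sup fun a => ‖c a‖₊ : ℝ≥0) : ℝ) ≤ 1 := by
    have h3 : (Finset.univ.sup fun a => ‖c a‖₊) ≤ 1 := by
      apply Finset.sup_le; intro a _
      rw [hc]; dsimp only; split_ifs <;> simp
    exact_mod_cast h3
  calc ∑ a, |f (x a)| = f (∑ a, c a • x a) := h2
    _ ≤ |f (∑ a, c a • x a)| := le_abs_self _
    _ ≤ ‖f‖ * ‖∑ a, c a • x a‖ := (f.le_opNorm _)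
    _ ≤ 1 * (K * ((Finset.univ.sup fun a => ‖c a‖₊ : ℝ≥0) : ℝ)) := by
        apply mul_le_mul hf ((hx c).2) (norm_nonneg _) zero_le_one
    _ ≤ 1 * (K * 1) := by
        apply mul_le_mul_of_nonneg_left _ zero_le_one
        apply mul_le_mul_of_nonneg_left hsup (le_trans zero_le_one hK)
    _ = K := by ring

lemma gap_card_le {X : Type} [NormedAddCommGroup X] [NormedSpace ℝ X]
    {N : ℕ} {K ε : ℝ} (hε : 0 < ε) (hK : 1 ≤ K) {x : Fin N → X}
    (hx : KEquivLinftyUVB N K x) (f : StrongDual ℝ X) (hf : ‖f‖ ≤ 1) :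
    (Finset.univ.filter fun a => ε ≤ |f (x a)|).card ≤ ⌈K / ε⌉₊ := by
  classical
  set S := Finset.univ.filter fun a => ε ≤ |f (x a)| with hS
  have h1 : (S.card : ℝ) * ε ≤ K := by
    calc (S.card : ℝ) * ε = ∑ _a ∈ S, ε := by rw [Finset.sum_const, nsmul_eq_mul]
      _ ≤ ∑ a ∈ S, |f (x a)| :=
          Finset.sum_le_sum (fun a ha => (Finset.mem_filter.1 ha).2)
      _ ≤ ∑ a, |f (x a)| :=
          Finset.sum_le_sum_of_subset_of_nonneg (Finset.subset_univ _)
            (fun a _ _ => abs_nonneg _)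
      _ ≤ K := gap_sum_abs_le hK hx f hf
  have h2 : (S.card : ℝ) ≤ K / ε := (le_div_iff₀ hε).2 h1
  exact_mod_cast h2.trans (Nat.le_ceil _)

lemma gap_main {X : Type} [NormedAddCommGroup X] [NormedSpace ℝ X]
    {ε K : ℝ} (hε : 0 < ε) (hK : 1 ≤ K) {m N : ℕ}
    (hN : (m + 2) * (m + 2) * ⌈K / ε⌉₊ < N)
    (x : Fin (m + 2) → Fin N → X) (f : Fin (m + 2) → Fin N → StrongDual ℝ X)
    (hx : ∀ i, KEquivLinftyUVB N K (x i)) (hf : ∀ i l, ‖f i l‖ ≤ 1) :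
    ∃ l : Fin (m + 2) → Fin N, ∀ i j : Fin (m + 2), i ≠ j →
      |f j (l j) (x i (l i))| < ε := by
  classical
  set D : ℕ := ⌈K / ε⌉₊ with hDdef
  by_contra hcon
  push_neg at hcon
  set T : Finset (Fin (m + 2) → Fin N) :=
    Finset.univ.filter
      (fun l => ∃ i j, i ≠ j ∧ ε ≤ |f j (l j) (x i (l i))|) with hT
  have hTuniv : T = Finset.univ := by
    apply Finset.eq_univ_iff_forall.2
    intro l
    obtain ⟨i, j, hij, h⟩ := hcon l
    exact Finset.mem_filter.2 ⟨Finset.mem_univ _, i, j, hij, h⟩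
  -- bound the card of each bad slice
  have hTij : ∀ i j : Fin (m + 2), i ≠ j →
      (Finset.univ.filter
        (fun l : Fin (m + 2) → Fin N => ε ≤ |f j (l j) (x i (l i))|)).card
        ≤ N * D * N ^ m := by
    intro i j hij
    set B : Finset (Fin N × Fin N) :=
      Finset.univ.filter (fun p => ε ≤ |f j p.2 (x i p.1)|) with hB
    have hBcard : B.card ≤ N * D := by
      rw [Finset.card_eq_sum_card_fiberwise
        (f := Prod.snd) (t := Finset.univ) (fun p _ => Finset.mem_univ _)]
      calc ∑ b : Fin N, (B.filter fun p => p.2 = b).card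
          ≤ ∑ _b : Fin N, D := by
            apply Finset.sum_le_sum
            intro b _
            have hcb := gap_card_le hε hK (hx i) (f j b) (hf j b)
            refine le_trans ?_ hcb
            apply Finset.card_le_card_of_injOn (fun p => p.1)
            · intro p hp
              simp only [hB, Finset.mem_coe, Finset.mem_filter, Finset.mem_univ, true_and] at hp ⊢
              obtain ⟨h1, h2⟩ := hp
              rwa [h2] at h1
            · intro p hp q hq hpq
              simp only [Finset.mem_coe, Finset.mem_filter] at hp hq
              exact Prod.ext hpq (hp.2.trans hq.2.symm)
        _ = N * D := by simp [mul_comm]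
    -- fiber bound
    have hfiber : ∀ p : Fin N × Fin N,
        ((Finset.univ.filter
          (fun l : Fin (m + 2) → Fin N => ε ≤ |f j (l j) (x i (l i))|)).filter
          (fun l => (l i, l j) = p)).card ≤ N ^ m := by
      intro p
      have hcardsub : Fintype.card {m' : Fin (m + 2) // m' ≠ i ∧ m' ≠ j} = m := by
        rw [Fintype.card_subtype]
        have heq : (Finset.univ.filter fun m' : Fin (m + 2) => m' ≠ i ∧ m' ≠ j)
            = Finset.univ \ {i, j} := by
          ext m'; simp [Finset.mem_sdiff]
        rw [heq, Finset.card_sdiff_of_subset (Finset.subset_univ _), Finset.card_pair hij]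
        simp
      have hcf := Fintype.card_fun (α := {m' : Fin (m + 2) // m' ≠ i ∧ m' ≠ j})
        (β := Fin N)
      calc ((Finset.univ.filter
          (fun l : Fin (m + 2) → Fin N => ε ≤ |f j (l j) (x i (l i))|)).filter
          (fun l => (l i, l j) = p)).card
          ≤ (Finset.univ : Finset ({m' : Fin (m + 2) // m' ≠ i ∧ m' ≠ j} → Fin N)).card := by
            apply Finset.card_le_card_of_injOn (fun l s => l s.1)
            · intro l _; exact Finset.mem_univ _
            · intro l₁ h₁ l₂ h₂ hl
              simp only [Finset.mem_coe, Finset.mem_filter] at h₁ h₂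
              have e₁ : (l₁ i, l₁ j) = p := h₁.2
              have e₂ : (l₂ i, l₂ j) = p := h₂.2
              have e : (l₁ i, l₁ j) = (l₂ i, l₂ j) := e₁.trans e₂.symm
              funext m'
              by_cases hmi : m' = i
              · subst hmi
                exact (Prod.mk.injEq _ _ _ _ ▸ e).1
              · by_cases hmj : m' = j
                · subst hmj
                  exact (Prod.mk.injEq _ _ _ _ ▸ e).2
                · exact congrFun hl ⟨m', hmi, hmj⟩
        _ = N ^ m := by
            rw [Finset.card_univ, hcf, hcardsub, Fintype.card_fin]
    rw [Finset.card_eq_sum_card_fiberwise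
      (f := fun l => (l i, l j)) (t := B) ?_]
    · calc ∑ p ∈ B, ((Finset.univ.filter
          (fun l : Fin (m + 2) → Fin N => ε ≤ |f j (l j) (x i (l i))|)).filter
          (fun l => (l i, l j) = p)).card
          ≤ ∑ _p ∈ B, N ^ m := Finset.sum_le_sum (fun p _ => hfiber p)
        _ = B.card * N ^ m := by rw [Finset.sum_const, smul_eq_mul]
        _ ≤ N * D * N ^ m := Nat.mul_le_mul_right _ hBcard
    · intro l hl
      simp only [hB, Finset.mem_coe, Finset.mem_filter, Finset.mem_univ, true_and] at hl ⊢
      exact hl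
  -- combine
  have hTcard : T.card ≤ (m + 2) * (m + 2) * (N * D * N ^ m) := by
    have hsub : T ⊆ (Finset.univ : Finset (Fin (m+2))).offDiag.biUnion
        (fun q => Finset.univ.filter
          (fun l : Fin (m + 2) → Fin N => ε ≤ |f q.2 (l q.2) (x q.1 (l q.1))|)) := by
      intro l hl
      obtain ⟨_, i, j, hij, h⟩ := Finset.mem_filter.1 hl
      exact Finset.mem_biUnion.2 ⟨(i, j), Finset.mem_offDiag.2 ⟨Finset.mem_univ _,
        Finset.mem_univ _, hij⟩, Finset.mem_filter.2 ⟨Finset.mem_univ _, h⟩⟩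
    calc T.card ≤ _ := Finset.card_le_card hsub
      _ ≤ ∑ q ∈ (Finset.univ : Finset (Fin (m+2))).offDiag,
          (Finset.univ.filter
            (fun l : Fin (m + 2) → Fin N => ε ≤ |f q.2 (l q.2) (x q.1 (l q.1))|)).card :=
          Finset.card_biUnion_le
      _ ≤ ∑ _q ∈ (Finset.univ : Finset (Fin (m+2))).offDiag, N * D * N ^ m := by
          apply Finset.sum_le_sum
          intro q hq
          exact hTij q.1 q.2 (Finset.mem_offDiag.1 hq).2.2
      _ = (Finset.univ : Finset (Fin (m+2))).offDiag.card * (N * D * N ^ m) := by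
          rw [Finset.sum_const, smul_eq_mul]
      _ ≤ (m + 2) * (m + 2) * (N * D * N ^ m) := by
          apply Nat.mul_le_mul_right
          have hoc : (Finset.univ : Finset (Fin (m+2))).offDiag.card
              = (m + 2) * (m + 2) - (m + 2) := by
            rw [Finset.offDiag_card]; simp
          omega
  have hall : (Finset.univ : Finset (Fin (m + 2) → Fin N)).card = N ^ (m + 2) := by
    rw [Finset.card_univ, Fintype.card_fun]
    simp
  rw [hTuniv, hall] at hTcard
  have hNpos : 0 < N := by omega
  have hlt : (m + 2) * (m + 2) * (N * D * N ^ m) < N ^ (m + 2) := by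
    have h2 : (0:ℕ) < N * N ^ m := by positivity
    calc (m + 2) * (m + 2) * (N * D * N ^ m)
        = ((m + 2) * (m + 2) * D) * (N * N ^ m) := by ring
      _ < N * (N * N ^ m) := by
          exact Nat.mul_lt_mul_of_lt_of_le hN (le_refl _) h2
      _ = N ^ (m + 2) := by ring
  omega

theorem gap_lemma (ε : ℝ) (hε : 0 < ε) (M : ℕ) (K : ℝ) (hK : 1 ≤ K) :
    ∃ N : ℕ, ∀ (X : Type) [NormedAddCommGroup X] [NormedSpace ℝ X] [CompleteSpace X],
      ∀ (x : Fin M → Fin N → X) (f : Fin M → Fin N → StrongDual ℝ X),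
        (∀ i, KEquivLinftyUVB N K (x i)) → (∀ i l, ‖f i l‖ ≤ 1) →
        ∃ l : Fin M → Fin N, ∀ i j : Fin M, i ≠ j → |f j (l j) (x i (l i))| < ε := by
  classical
  refine ⟨M * M * ⌈K / ε⌉₊ + 1, ?_⟩
  intro X _ _ _ x f hx hf
  rcases lt_or_ge M 2 with hM | hM
  · refine ⟨fun _ => ⟨0, by omega⟩, ?_⟩
    intro i j hij
    have hi := i.isLt; have hj := j.isLt
    exact absurd (Fin.ext (by omega)) hij
  · obtain ⟨m, rfl⟩ : ∃ m, M = m + 2 := ⟨M - 2, by omega⟩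
    exact gap_main hε hK (by omega) x f hx hf
end
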